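/- arXiv:2501.15936 — 8 statements merged into one kernel-verified Lean document; each statement's English description precedes it below -/
import Mathlib

section
/- For every integer d ≥ 4 and every ω ∈ ℝ, ∫₀^π (e^{(θ−π)ω} + e^{−(θ−π)ω}) (sin θ)^{d−2} dθ = ((d−2)(d−3)/(ω² + (d−2)²)) · ∫₀^π (e^{(θ−π)ω} + e^{−(θ−π)ω}) (sin θ)^{d−4} dθ. -/
open Real intervalIntegral

private lemma expf (ω θ : ℝ) : HasDerivAt (fun θ : ℝ => (θ - Real.pi) * ω) ω θ := by
  simpa using ((hasDerivAt_id θ).sub_const Real.pi).mul_const ω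

private lemma hDF (m : ℕ) (ω : ℝ) (θ : ℝ) :
    HasDerivAt (fun θ : ℝ =>
      ω * (Real.exp ((θ - Real.pi) * ω) - Real.exp (-((θ - Real.pi) * ω))) * Real.sin θ ^ (m + 2)
      - ((m : ℝ) + 2) * ((Real.exp ((θ - Real.pi) * ω) + Real.exp (-((θ - Real.pi) * ω))) * Real.cos θ) * Real.sin θ ^ (m + 1))
      ((ω ^ 2 + ((m : ℝ) + 2) ^ 2) *
          ((Real.exp ((θ - Real.pi) * ω) + Real.exp (-((θ - Real.pi) * ω))) * Real.sin θ ^ (m + 2))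
        - ((m : ℝ) + 2) * ((m : ℝ) + 1) *
          ((Real.exp ((θ - Real.pi) * ω) + Real.exp (-((θ - Real.pi) * ω))) * Real.sin θ ^ m)) θ := by
  have hE1 := (expf ω θ).exp
  have hE2 := (expf ω θ).neg.exp
  have hsin := Real.hasDerivAt_sin θ
  have H := ((((hE1.sub hE2).const_mul ω).mul (hsin.pow (m+2))).sub
    ((((hE1.add hE2).mul (Real.hasDerivAt_cos θ)).const_mul ((m:ℝ)+2)).mul (hsin.pow (m+1))))
  refine H.congr_deriv (Eq.symm ?_)
  have hc : Real.cos θ ^ 2 = 1 - Real.sin θ ^ 2 := Real.cos_sq' θ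
  simp only [Nat.add_sub_cancel, Pi.add_apply, Pi.sub_apply, Pi.mul_apply, Pi.pow_apply, Pi.neg_apply]
  push_cast
  linear_combination ((m:ℝ)+2)*((m:ℝ)+1)*(Real.exp ((θ - Real.pi) * ω) + Real.exp (-((θ - Real.pi) * ω)))*Real.sin θ ^ m * hc

private lemma key (m : ℕ) (ω : ℝ) :
    (ω ^ 2 + ((m : ℝ) + 2) ^ 2) *
      (∫ θ in (0:ℝ)..Real.pi,
        (Real.exp ((θ - Real.pi) * ω) + Real.exp (-((θ - Real.pi) * ω))) * Real.sin θ ^ (m + 2))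
    = ((m : ℝ) + 2) * ((m : ℝ) + 1) *
      ∫ θ in (0:ℝ)..Real.pi,
        (Real.exp ((θ - Real.pi) * ω) + Real.exp (-((θ - Real.pi) * ω))) * Real.sin θ ^ m := by
  have hcont : ∀ k : ℕ, Continuous (fun θ : ℝ =>
      (Real.exp ((θ - Real.pi) * ω) + Real.exp (-((θ - Real.pi) * ω))) * Real.sin θ ^ k) := by
    intro k; fun_prop
  have hint : ∀ k : ℕ, IntervalIntegrable (fun θ : ℝ =>
      (Real.exp ((θ - Real.pi) * ω) + Real.exp (-((θ - Real.pi) * ω))) * Real.sin θ ^ k)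
      MeasureTheory.volume 0 Real.pi := fun k => (hcont k).intervalIntegrable 0 Real.pi
  have hzero : (∫ θ in (0:ℝ)..Real.pi,
      ((ω ^ 2 + ((m : ℝ) + 2) ^ 2) *
          ((Real.exp ((θ - Real.pi) * ω) + Real.exp (-((θ - Real.pi) * ω))) * Real.sin θ ^ (m + 2))
        - ((m : ℝ) + 2) * ((m : ℝ) + 1) *
          ((Real.exp ((θ - Real.pi) * ω) + Real.exp (-((θ - Real.pi) * ω))) * Real.sin θ ^ m))) = 0 := by
    rw [intervalIntegral.integral_eq_sub_of_hasDerivAt (fun θ _ => hDF m ω θ)]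
    · simp
    · apply Continuous.intervalIntegrable
      fun_prop
  rw [intervalIntegral.integral_sub ((hint (m+2)).const_mul _) ((hint m).const_mul _),
    intervalIntegral.integral_const_mul, intervalIntegral.integral_const_mul] at hzero
  linarith

/-- Integration-by-parts recursion in the dimension `d` for the integral
`∫₀^π (e^{(θ−π)ω} + e^{−(θ−π)ω}) (sin θ)^{d−2} dθ`. -/
theorem sin_pow_exp_integral_recursion (d : ℕ) (hd : 4 ≤ d) (ω : ℝ) :
    (∫ θ in (0:ℝ)..Real.pi,
        (Real.exp ((θ - Real.pi) * ω) + Real.exp (-((θ - Real.pi) * ω))) *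
          (Real.sin θ) ^ (d - 2))
      = ((d : ℝ) - 2) * ((d : ℝ) - 3) / (ω ^ 2 + ((d : ℝ) - 2) ^ 2) *
        ∫ θ in (0:ℝ)..Real.pi,
          (Real.exp ((θ - Real.pi) * ω) + Real.exp (-((θ - Real.pi) * ω))) *
            (Real.sin θ) ^ (d - 4) := by
  obtain ⟨m, rfl⟩ := Nat.exists_eq_add_of_le hd
  have h2 : 4 + m - 2 = m + 2 := by omega
  have h4 : 4 + m - 4 = m := by omega
  have hcast : ((4 + m : ℕ) : ℝ) = (m : ℝ) + 4 := by push_cast; ring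
  rw [h2, h4, hcast]
  have hk := key m ω
  have hpos : ω ^ 2 + ((m : ℝ) + 2) ^ 2 > 0 := by positivity
  have : (m : ℝ) + 4 - 2 = (m : ℝ) + 2 := by ring
  rw [this]
  have : (m : ℝ) + 4 - 3 = (m : ℝ) + 1 := by ring
  rw [this]
  rw [div_mul_eq_mul_div, eq_div_iff hpos.ne']
  linarith [hk]
end

section
/- For every even integer d ≥ 4 and every ω ∈ ℝ with ω ≠ 0, ∫₀^π (e^{(θ−π)ω} + e^{−(θ−π)ω}) (sin θ)^{d−2} dθ = (d−2)! · (e^{πω} − e^{−πω}) / (ω · ∏_{k=1}^{(d−2)/2} (ω² + (d−2k)²)). -/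
open Real intervalIntegral

private noncomputable def Fe (ω θ : ℝ) : ℝ :=
  Real.exp ((θ - Real.pi) * ω) + Real.exp (-((θ - Real.pi) * ω))

private lemma Fe_cont (ω : ℝ) : Continuous (Fe ω) := by
  unfold Fe; fun_prop

private lemma Fe_hasDeriv (ω θ : ℝ) :
    HasDerivAt (Fe ω) (ω * (Real.exp ((θ - Real.pi) * ω) - Real.exp (-((θ - Real.pi) * ω)))) θ := by
  have h1 : HasDerivAt (fun θ : ℝ => (θ - Real.pi) * ω) ω θ := by
    simpa using ((hasDerivAt_id θ).sub_const Real.pi).mul_const ω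
  have h2 := h1.exp
  have h3 := h1.neg.exp
  have := h2.add h3
  unfold Fe
  refine this.congr_deriv (Eq.symm ?_)
  simp only [Pi.neg_apply]
  ring

private lemma Fe'_hasDeriv (ω θ : ℝ) :
    HasDerivAt (fun θ => ω * (Real.exp ((θ - Real.pi) * ω) - Real.exp (-((θ - Real.pi) * ω))))
      (ω ^ 2 * Fe ω θ) θ := by
  have h1 : HasDerivAt (fun θ : ℝ => (θ - Real.pi) * ω) ω θ := by
    simpa using ((hasDerivAt_id θ).sub_const Real.pi).mul_const ω
  have := ((h1.exp).sub (h1.neg.exp)).const_mul ω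
  refine this.congr_deriv (Eq.symm ?_)
  simp only [Pi.neg_apply]
  unfold Fe
  ring

private lemma base_case (ω : ℝ) (hω : ω ≠ 0) :
    ∫ θ in (0:ℝ)..Real.pi, Fe ω θ
      = (Real.exp (Real.pi * ω) - Real.exp (-(Real.pi * ω))) / ω := by
  have h : ∀ θ ∈ Set.uIcc (0:ℝ) Real.pi,
      HasDerivAt (fun θ =>
        (Real.exp ((θ - Real.pi) * ω) - Real.exp (-((θ - Real.pi) * ω))) / ω) (Fe ω θ) θ := by
    intro θ _
    have h1 : HasDerivAt (fun θ : ℝ => (θ - Real.pi) * ω) ω θ := by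
      simpa using ((hasDerivAt_id θ).sub_const Real.pi).mul_const ω
    have := ((h1.exp).sub (h1.neg.exp)).div_const ω
    refine this.congr_deriv (Eq.symm ?_)
    simp only [Pi.neg_apply]
    unfold Fe
    field_simp
    ring
  rw [intervalIntegral.integral_eq_sub_of_hasDerivAt h ((Fe_cont ω).intervalIntegrable _ _)]
  simp only [sub_self, zero_mul, neg_zero, Real.exp_zero, zero_sub, neg_mul]
  ring

private lemma rec_step (ω : ℝ) (k : ℕ) :
    (ω ^ 2 + ((k:ℝ) + 2) ^ 2) * ∫ θ in (0:ℝ)..Real.pi, Fe ω θ * Real.sin θ ^ (k + 2)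
      = ((k:ℝ) + 2) * ((k:ℝ) + 1) * ∫ θ in (0:ℝ)..Real.pi, Fe ω θ * Real.sin θ ^ k := by
  set g : ℝ → ℝ := fun θ =>
    ω * (Real.exp ((θ - Real.pi) * ω) - Real.exp (-((θ - Real.pi) * ω))) * Real.sin θ ^ (k + 2)
      - ((k:ℝ) + 2) * Fe ω θ * Real.sin θ ^ (k + 1) * Real.cos θ with hg
  have hderiv : ∀ θ ∈ Set.uIcc (0:ℝ) Real.pi,
      HasDerivAt g
        ((ω ^ 2 + ((k:ℝ) + 2) ^ 2) * (Fe ω θ * Real.sin θ ^ (k + 2))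
          - ((k:ℝ) + 2) * ((k:ℝ) + 1) * (Fe ω θ * Real.sin θ ^ k)) θ := by
    intro θ _
    have hsin : HasDerivAt (fun θ : ℝ => Real.sin θ ^ (k + 2))
        ((k + 2 : ℕ) * Real.sin θ ^ (k + 1) * Real.cos θ) θ := by
      simpa using (Real.hasDerivAt_sin θ).fun_pow (k + 2)
    have hsin1 : HasDerivAt (fun θ : ℝ => Real.sin θ ^ (k + 1))
        ((k + 1 : ℕ) * Real.sin θ ^ k * Real.cos θ) θ := by
      simpa using (Real.hasDerivAt_sin θ).fun_pow (k + 1)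
    have hA := (Fe'_hasDeriv ω θ).mul hsin
    have hB := (((Fe_hasDeriv ω θ).const_mul ((k:ℝ) + 2)).mul hsin1).mul (Real.hasDerivAt_cos θ)
    have hg' := hA.sub hB
    refine hg'.congr_deriv (Eq.symm ?_)
    simp only [Pi.mul_apply]
    have hc : Real.cos θ ^ 2 = 1 - Real.sin θ ^ 2 := Real.cos_sq' θ
    unfold Fe
    push_cast
    linear_combination (((k:ℝ) + 2) * ((k:ℝ) + 1) *
      (Real.exp ((θ - Real.pi) * ω) + Real.exp (-((θ - Real.pi) * ω))) * Real.sin θ ^ k) * hc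
  have hcont : Continuous fun θ =>
      (ω ^ 2 + ((k:ℝ) + 2) ^ 2) * (Fe ω θ * Real.sin θ ^ (k + 2))
        - ((k:ℝ) + 2) * ((k:ℝ) + 1) * (Fe ω θ * Real.sin θ ^ k) := by
    unfold Fe; fun_prop
  have hint := intervalIntegral.integral_eq_sub_of_hasDerivAt hderiv
    (hcont.intervalIntegrable _ _)
  have hzero : g Real.pi - g 0 = 0 := by
    simp [hg, Real.sin_pi, Real.sin_zero, zero_pow, Nat.succ_ne_zero]
  rw [hzero] at hint
  have hi1 : IntervalIntegrable (fun θ => Fe ω θ * Real.sin θ ^ (k + 2)) MeasureTheory.volume 0 Real.pi := by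
    apply Continuous.intervalIntegrable; unfold Fe; fun_prop
  have hi2 : IntervalIntegrable (fun θ => Fe ω θ * Real.sin θ ^ k) MeasureTheory.volume 0 Real.pi := by
    apply Continuous.intervalIntegrable; unfold Fe; fun_prop
  rw [intervalIntegral.integral_sub ((hi1.const_mul _)) ((hi2.const_mul _)),
    intervalIntegral.integral_const_mul, intervalIntegral.integral_const_mul] at hint
  linarith [hint]

private lemma prod_pos (ω : ℝ) (m : ℕ) :
    0 < ∏ k ∈ Finset.range m, (ω ^ 2 + (2 * (k:ℝ) + 2) ^ 2) := by
  apply Finset.prod_pos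
  intro k _
  positivity

private lemma main_ind (ω : ℝ) (hω : ω ≠ 0) (m : ℕ) :
    ∫ θ in (0:ℝ)..Real.pi, Fe ω θ * Real.sin θ ^ (2 * m)
      = (Nat.factorial (2 * m) : ℝ) * (Real.exp (Real.pi * ω) - Real.exp (-(Real.pi * ω))) /
        (ω * ∏ k ∈ Finset.range m, (ω ^ 2 + (2 * (k:ℝ) + 2) ^ 2)) := by
  induction m with
  | zero => simpa [Nat.factorial] using base_case ω hω
  | succ n ih =>
    have hr := rec_step ω (2 * n)
    have h2 : 2 * (n + 1) = 2 * n + 2 := by ring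
    rw [h2]
    have hpos : (0:ℝ) < ω ^ 2 + ((2 * n : ℕ) + 2 : ℝ) ^ 2 := by positivity
    have hpp := prod_pos ω n
    have heq : (∫ θ in (0:ℝ)..Real.pi, Fe ω θ * Real.sin θ ^ (2 * n + 2))
        = ((2 * n : ℝ) + 2) * ((2 * n : ℝ) + 1) / (ω ^ 2 + ((2 * n : ℕ) + 2 : ℝ) ^ 2)
          * ∫ θ in (0:ℝ)..Real.pi, Fe ω θ * Real.sin θ ^ (2 * n) := by
      field_simp
      push_cast at hr ⊢
      linarith [hr]
    rw [heq, ih, Finset.prod_range_succ]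
    have hfac : (Nat.factorial (2 * n + 2) : ℝ)
        = ((2 * n : ℝ) + 2) * ((2 * n : ℝ) + 1) * Nat.factorial (2 * n) := by
      have : (2 * n + 2) = (2 * n + 1) + 1 := by ring
      rw [this, Nat.factorial_succ, Nat.factorial_succ]
      push_cast
      ring
    rw [hfac]
    have hne1 : (ω ^ 2 + ((2 * n : ℕ) + 2 : ℝ) ^ 2) ≠ 0 := ne_of_gt hpos
    have hne2 : (∏ k ∈ Finset.range n, (ω ^ 2 + (2 * (k:ℝ) + 2) ^ 2)) ≠ 0 := ne_of_gt hpp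
    field_simp
    push_cast
    ring

/-- Closed form of `∫₀^π (e^{(θ−π)ω} + e^{−(θ−π)ω}) (sin θ)^{d−2} dθ` for even `d ≥ 4`
and `ω ≠ 0`. -/
theorem sin_pow_exp_integral_closed_form (d : ℕ) (hd : 4 ≤ d) (hde : Even d)
    (ω : ℝ) (hω : ω ≠ 0) :
    (∫ θ in (0:ℝ)..Real.pi,
        (Real.exp ((θ - Real.pi) * ω) + Real.exp (-((θ - Real.pi) * ω))) *
          (Real.sin θ) ^ (d - 2))
      = (Nat.factorial (d - 2) : ℝ) *
          (Real.exp (Real.pi * ω) - Real.exp (-(Real.pi * ω))) /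
          (ω * ∏ k ∈ Finset.Icc 1 ((d - 2) / 2), (ω ^ 2 + ((d : ℝ) - 2 * k) ^ 2)) := by
  obtain ⟨r, hr⟩ := hde
  have hr2 : 2 ≤ r := by omega
  set m := r - 1 with hm
  have hd2 : d - 2 = 2 * m := by omega
  have hdm : d = 2 * m + 2 := by omega
  have hdiv : (d - 2) / 2 = m := by omega
  have hprod : (∏ k ∈ Finset.Icc 1 ((d - 2) / 2), (ω ^ 2 + ((d : ℝ) - 2 * k) ^ 2))
      = ∏ k ∈ Finset.range m, (ω ^ 2 + (2 * (k:ℝ) + 2) ^ 2) := by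
    rw [hdiv]
    refine Finset.prod_nbij' (fun i => m - i) (fun j => m - j) ?_ ?_ ?_ ?_ ?_
    · intro a ha
      simp only [Finset.mem_Icc] at ha
      simp only [Finset.mem_range]
      omega
    · intro a ha
      simp only [Finset.mem_range] at ha
      simp only [Finset.mem_Icc]
      omega
    · intro a ha
      simp only [Finset.mem_Icc] at ha
      show m - (m - a) = a
      omega
    · intro a ha
      simp only [Finset.mem_range] at ha
      show m - (m - a) = a
      omega
    · intro a ha
      simp only [Finset.mem_Icc] at ha
      have : ((m - a : ℕ) : ℝ) = (m : ℝ) - a := by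
        have := ha.2
        push_cast [Nat.cast_sub this]
        ring
      rw [this, hdm]
      push_cast
      ring_nf
  rw [hprod, hd2]
  exact main_ind ω hω m
end

section
/- Let d ≥ 4 be an even integer, set λ_k := d − 2k for k = 1, …, (d−2)/2, and c_k := (∏_{j ≠ k, 1 ≤ j ≤ (d−2)/2} (λ_j − λ_k))^{−1} (with the empty product equal to 1 when d = 4). Then for every v ∈ ℝ, 2^{d/2 − 1} Γ(d/2) · Σ_{k=1}^{(d−2)/2} c_k e^{−(d−2k)v} = (d−2) e^{−2v} (1 − e^{−2v})^{(d−4)/2}. -/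
open Finset

private lemma prod_Icc_cast_fact (n : ℕ) : ∏ j ∈ Icc 1 n, (j : ℝ) = Nat.factorial n := by
  induction n with
  | zero => simp
  | succ n ih =>
      rw [show Icc 1 (n+1) = insert (n+1) (Icc 1 n) by ext x; simp [mem_Icc]; omega,
        Finset.prod_insert (by simp), ih]
      push_cast [Nat.factorial_succ]; ring

private lemma prod_Icc_reflect (n : ℕ) :
    ∏ j ∈ Icc 1 n, ((n : ℝ) + 1 - j) = Nat.factorial n := by
  rw [← prod_Icc_cast_fact n]
  refine Finset.prod_nbij' (fun j => n + 1 - j) (fun j => n + 1 - j) ?_ ?_ ?_ ?_ ?_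
  · intro a ha; simp only [mem_Icc] at *; omega
  · intro a ha; simp only [mem_Icc] at *; omega
  · intro a ha; simp only [mem_Icc] at *; omega
  · intro a ha; simp only [mem_Icc] at *; omega
  · intro a ha; simp only [mem_Icc] at ha
    have : ((n + 1 - a : ℕ) : ℝ) = (n : ℝ) + 1 - a := by
      push_cast [Nat.cast_sub (by omega : a ≤ n + 1)]; ring
    rw [this]

private lemma prod_erase_sub (m k : ℕ) (h1 : 1 ≤ k) (h2 : k ≤ m) :
    ∏ j ∈ (Icc 1 m).erase k, ((k : ℝ) - j)
      = (-1) ^ (m - k) * Nat.factorial (k - 1) * Nat.factorial (m - k) := by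
  induction m, h2 using Nat.le_induction with
  | base =>
      rw [show (Icc 1 k).erase k = Icc 1 (k - 1) by ext x; simp [mem_Icc]; omega]
      have := prod_Icc_reflect (k - 1)
      have hc : ((k - 1 : ℕ) : ℝ) + 1 = (k : ℝ) := by
        push_cast [Nat.cast_sub h1]; ring
      rw [hc] at this
      simp [this]
  | succ m hm ih =>
      rw [show (Icc 1 (m+1)).erase k = insert (m+1) ((Icc 1 m).erase k) by
            ext x; simp only [mem_Icc, mem_erase, mem_insert]; omega,
        Finset.prod_insert (by simp only [mem_erase, mem_Icc]; omega), ih]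
      have e1 : m + 1 - k = (m - k) + 1 := by omega
      rw [e1, Nat.factorial_succ]
      have e2 : ((m - k : ℕ) : ℝ) = (m : ℝ) - k := by push_cast [Nat.cast_sub hm]; ring
      push_cast [e2]
      ring

private lemma prod_diff (m k : ℕ) (h1 : 1 ≤ k) (h2 : k ≤ m) (c : ℝ) :
    ∏ j ∈ (Icc 1 m).erase k, ((c - 2 * j) - (c - 2 * k))
      = (-1) ^ (m - k) * 2 ^ (m - 1) * Nat.factorial (k - 1) * Nat.factorial (m - k) := by
  have hcard : ((Icc 1 m).erase k).card = m - 1 := by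
    rw [Finset.card_erase_of_mem (by simp [mem_Icc]; omega), Nat.card_Icc]; omega
  calc ∏ j ∈ (Icc 1 m).erase k, ((c - 2 * j) - (c - 2 * k))
      = ∏ j ∈ (Icc 1 m).erase k, (2 * ((k : ℝ) - j)) :=
        Finset.prod_congr rfl (fun j _ => by ring)
    _ = 2 ^ (m - 1) * ∏ j ∈ (Icc 1 m).erase k, ((k : ℝ) - j) := by
        rw [Finset.prod_mul_distrib, Finset.prod_const, hcard]
    _ = _ := by rw [prod_erase_sub m k h1 h2]; ring

private lemma scalar_id (a b : ℕ) :
    (2 : ℝ) ^ (a + b + 1) * (Nat.factorial (a + b + 1) : ℝ) *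
        ((-1 : ℝ) ^ a * (2 : ℝ) ^ (a + b) * (Nat.factorial b : ℝ) * (Nat.factorial a : ℝ))⁻¹
      = 2 * ((a : ℝ) + b + 1) * (Nat.choose (a + b) a : ℝ) * (-1 : ℝ) ^ a := by
  have key : ((Nat.factorial (a + b + 1) : ℝ))
      = ((a : ℝ) + b + 1) * (Nat.choose (a + b) a : ℝ) * (Nat.factorial a : ℝ)
          * (Nat.factorial b : ℝ) := by
    rw [Nat.factorial_succ]
    have h := Nat.add_choose_mul_factorial_mul_factorial b a
    rw [Nat.add_comm b a] at h
    push_cast [← h]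
    ring
  have h1 : (Nat.factorial a : ℝ) ≠ 0 := by positivity
  have h2 : (Nat.factorial b : ℝ) ≠ 0 := by positivity
  have h3 : ((-1 : ℝ) ^ a) ≠ 0 := by simp
  have h4 : ((2 : ℝ) ^ (a + b)) ≠ 0 := by positivity
  have h5 : ((-1 : ℝ) ^ a) * ((-1 : ℝ) ^ a) = 1 := by
    rw [← mul_pow]; norm_num
  have hY : (-1 : ℝ) ^ a * (2 : ℝ) ^ (a + b) * (Nat.factorial b : ℝ)
      * (Nat.factorial a : ℝ) ≠ 0 := by
    exact mul_ne_zero (mul_ne_zero (mul_ne_zero h3 h4) h2) h1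
  rw [key, ← div_eq_mul_inv, div_eq_iff hY]
  linear_combination (-2 * ((a : ℝ) + b + 1) * (Nat.choose (a + b) a : ℝ)
    * (2 : ℝ) ^ (a + b) * (Nat.factorial b : ℝ) * (Nat.factorial a : ℝ)) * h5

/-- Pointwise kernel identity: the moving-average kernel
`(d−2) e^{−2v} (1−e^{−2v})^{(d−4)/2}` of the derivative of the spherical average process
equals `2^{d/2−1} Γ(d/2)` times the linear combination `Σ c_k e^{−(d−2k)v}` of exponentials
associated with the eigenvalues `−λ_k = −(d−2k)` of the companion matrix. -/
theorem kernel_exponential_identity (d : ℕ) (hd : 4 ≤ d) (hde : Even d) (v : ℝ) :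
    (2 : ℝ) ^ (d / 2 - 1) * Real.Gamma ((d : ℝ) / 2) *
        ∑ k ∈ Finset.Icc 1 ((d - 2) / 2),
          (∏ j ∈ (Finset.Icc 1 ((d - 2) / 2)).erase k,
              (((d : ℝ) - 2 * j) - ((d : ℝ) - 2 * k)))⁻¹ *
            Real.exp (-(((d : ℝ) - 2 * k) * v))
      = ((d : ℝ) - 2) * Real.exp (-(2 * v)) * (1 - Real.exp (-(2 * v))) ^ ((d - 4) / 2) := by

  obtain ⟨r, hr⟩ := hde
  set m : ℕ := (d - 2) / 2 with hm
  have hdm : d = 2 * m + 2 := by omega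
  have hm1 : 1 ≤ m := by omega
  have e1 : d / 2 - 1 = m := by omega
  have e2 : (d - 4) / 2 = m - 1 := by omega
  rw [e1, e2]
  have hG : Real.Gamma ((d : ℝ) / 2) = (Nat.factorial m : ℝ) := by
    have h : ((d : ℝ) / 2) = (m : ℝ) + 1 := by
      rw [hdm]; push_cast; ring
    rw [h, Real.Gamma_nat_eq_factorial]
  rw [hG]
  set x := Real.exp (-(2 * v)) with hx
  have hcd : ((d : ℝ) - 2) = 2 * m := by rw [hdm]; push_cast; ring
  -- Transform the left-hand side
  have hL : (2 : ℝ) ^ m * (Nat.factorial m : ℝ) *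
        ∑ k ∈ Finset.Icc 1 m,
          (∏ j ∈ (Finset.Icc 1 m).erase k,
              (((d : ℝ) - 2 * j) - ((d : ℝ) - 2 * k)))⁻¹ *
            Real.exp (-(((d : ℝ) - 2 * k) * v))
      = ∑ k ∈ Finset.Icc 1 m,
          (2 : ℝ) ^ m * (Nat.factorial m : ℝ) *
            ((-1 : ℝ) ^ (m - k) * (2 : ℝ) ^ (m - 1) * (Nat.factorial (k - 1) : ℝ)
              * (Nat.factorial (m - k) : ℝ))⁻¹ * x ^ (m + 1 - k) := by
    rw [Finset.mul_sum]
    refine Finset.sum_congr rfl ?_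
    intro k hk
    simp only [Finset.mem_Icc] at hk
    rw [prod_diff m k hk.1 hk.2 (d : ℝ)]
    have hexp : -(((d : ℝ) - 2 * k) * v) = ((m + 1 - k : ℕ) : ℝ) * (-(2 * v)) := by
      have hc : ((m + 1 - k : ℕ) : ℝ) = (m : ℝ) + 1 - k := by
        push_cast [Nat.cast_sub (by omega : k ≤ m + 1)]
        ring
      rw [hc, hdm]; push_cast; ring
    rw [hexp, Real.exp_nat_mul, ← hx]; ring
  rw [hL]
  -- Transform the right-hand side via the binomial theorem
  have hR : ((d : ℝ) - 2) * x * (1 - x) ^ (m - 1)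
      = ∑ i ∈ Finset.range m,
          2 * (m : ℝ) * (Nat.choose (m - 1) i : ℝ) * (-1 : ℝ) ^ i * x ^ (i + 1) := by
    have hb : (1 - x) = (-x) + 1 := by ring
    rw [hcd, hb, add_pow]
    rw [show m - 1 + 1 = m by omega]
    rw [Finset.mul_sum]
    refine Finset.sum_congr rfl ?_
    intro i hi
    rw [neg_pow]
    ring
  rw [hR]
  -- Reindex and match term by term
  refine Finset.sum_nbij' (fun k => m - k) (fun i => m - i) ?_ ?_ ?_ ?_ ?_
  · intro a ha; simp only [Finset.mem_Icc, Finset.mem_range] at *; omega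
  · intro a ha; simp only [Finset.mem_Icc, Finset.mem_range] at *; omega
  · intro a ha; simp only [Finset.mem_Icc, Finset.mem_range] at *; omega
  · intro a ha; simp only [Finset.mem_Icc, Finset.mem_range] at *; omega
  · intro k hk
    simp only [Finset.mem_Icc] at hk
    have hs := scalar_id (m - k) (k - 1)
    rw [show m - k + (k - 1) + 1 = m by omega, show m - k + (k - 1) = m - 1 by omega] at hs
    rw [mul_assoc ((2:ℝ)^m)] at hs
    rw [mul_assoc ((2:ℝ)^m) (Nat.factorial m : ℝ), hs]
    rw [show m + 1 - k = m - k + 1 by omega]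
    have hc1 : ((m - k : ℕ) : ℝ) = (m : ℝ) - k := by
      push_cast [Nat.cast_sub hk.2]; ring
    have hc2 : ((k - 1 : ℕ) : ℝ) = (k : ℝ) - 1 := by
      push_cast [Nat.cast_sub hk.1]; ring
    rw [hc1, hc2]
    ring
end

section
/- Let d ≥ 2 be an integer, c(d) := Γ(d/2)/(2√π · Γ((d−1)/2)), and for r₁, r₂ > 0 define K_d(r₁, r₂) := −c(d) ∫₀^π log(r₁² + r₂² − 2 r₁ r₂ cos θ) (sin θ)^{d−2} dθ. Then for every t ∈ ℝ, K_d(e^{−t}, e^{−t}) − 2 K_d(e^{−t}, 1) + K_d(1, 1) = |t| + 2 c(d) ∫₀^π log((1 + e^{−2|t|} − 2 e^{−|t|} cos θ)/(2 − 2 cos θ)) (sin θ)^{d−2} dθ. -/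
open Real MeasureTheory intervalIntegral

private lemma aux_sinpow_gamma (n : ℕ) :
    (∫ x in (0:ℝ)..Real.pi, Real.sin x ^ n)
      = Real.sqrt Real.pi * Real.Gamma (((n:ℝ) + 1) / 2) / Real.Gamma (((n:ℝ) + 2) / 2) := by
  have hsπ : Real.sqrt Real.pi ≠ 0 := (Real.sqrt_pos.mpr Real.pi_pos).ne'
  induction n using Nat.twoStepInduction with
  | zero =>
    simp only [pow_zero, intervalIntegral.integral_const, smul_eq_mul, mul_one, sub_zero,
      Nat.cast_zero]
    rw [show ((0:ℝ) + 1) / 2 = 1/2 by norm_num, show ((0:ℝ) + 2) / 2 = 1 by norm_num,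
      Real.Gamma_one_half_eq, Real.Gamma_one]
    rw [div_one, Real.mul_self_sqrt Real.pi_pos.le]
  | one =>
    simp_rw [pow_one]
    rw [integral_sin, Real.cos_zero, Real.cos_pi, Nat.cast_one,
      show ((1:ℝ) + 2) / 2 = 1/2 + 1 by norm_num, Real.Gamma_add_one (by norm_num),
      Real.Gamma_one_half_eq, show ((1:ℝ) + 1) / 2 = 1 by norm_num, Real.Gamma_one]
    field_simp
    ring
  | more n ih _ =>
    have ha : (0:ℝ) < ((n:ℝ) + 1) / 2 := by positivity
    have hb : (0:ℝ) < ((n:ℝ) + 2) / 2 := by positivity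
    have hΓa : Real.Gamma (((n:ℝ) + 1) / 2) ≠ 0 := (Real.Gamma_pos_of_pos ha).ne'
    have hΓb : Real.Gamma (((n:ℝ) + 2) / 2) ≠ 0 := (Real.Gamma_pos_of_pos hb).ne'
    have g1 : Real.Gamma (((n:ℝ) + 3) / 2) = (((n:ℝ) + 1) / 2) * Real.Gamma (((n:ℝ) + 1) / 2) := by
      rw [show ((n:ℝ) + 3) / 2 = ((n:ℝ) + 1) / 2 + 1 by ring, Real.Gamma_add_one ha.ne']
    have g2 : Real.Gamma (((n:ℝ) + 4) / 2) = (((n:ℝ) + 2) / 2) * Real.Gamma (((n:ℝ) + 2) / 2) := by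
      rw [show ((n:ℝ) + 4) / 2 = ((n:ℝ) + 2) / 2 + 1 by ring, Real.Gamma_add_one hb.ne']
    rw [integral_sin_pow, ih]
    simp only [Real.sin_zero, Real.sin_pi, Real.cos_zero, Real.cos_pi,
      zero_pow (Nat.succ_ne_zero n), zero_mul, mul_one, sub_zero, zero_sub, neg_zero, mul_neg,
      zero_div, zero_add]
    push_cast
    rw [show ((n:ℝ) + 2 + 1) / 2 = ((n:ℝ) + 3) / 2 by ring,
      show ((n:ℝ) + 2 + 2) / 2 = ((n:ℝ) + 4) / 2 by ring, g1, g2]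
    have hn2 : ((n:ℝ) + 2) ≠ 0 := by positivity
    field_simp

private lemma aux_integrable_log (k : ℕ) :
    IntervalIntegrable (fun θ : ℝ => Real.log (2 - 2 * Real.cos θ) * Real.sin θ ^ k)
      MeasureTheory.volume 0 Real.pi := by
  have hπ := Real.pi_pos
  have hgint : IntervalIntegrable
      (fun θ : ℝ => (Real.log 4 + 2 * Real.log Real.pi) + 4 * θ ^ (-(1/2) : ℝ))
      MeasureTheory.volume 0 Real.pi :=
    intervalIntegrable_const.add ((intervalIntegrable_rpow' (by norm_num)).const_mul 4)
  refine hgint.mono_fun' ?_ ?_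
  · exact ((Real.measurable_log.comp (by fun_prop)).mul (by fun_prop)).aestronglyMeasurable
  · rw [Set.uIoc_of_le hπ.le]
    refine (ae_restrict_iff' measurableSet_Ioc).mpr (Filter.Eventually.of_forall ?_)
    rintro θ ⟨h0, hπ'⟩
    have hs2 : 0 < Real.sin (θ / 2) :=
      Real.sin_pos_of_pos_of_lt_pi (by linarith) (by linarith)
    have hub : θ / Real.pi ≤ Real.sin (θ / 2) := by
      have h := Real.mul_le_sin (x := θ / 2) (by linarith) (by linarith)
      have h2 : 2 / Real.pi * (θ / 2) = θ / Real.pi := by ring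
      linarith [h2 ▸ h]
    have hkey : Real.sin (θ / 2) ^ 2 = 1 / 2 - Real.cos θ / 2 := by
      have h := Real.sin_sq_eq_half_sub (θ / 2)
      rwa [show 2 * (θ / 2) = θ by ring] at h
    have hu : 2 - 2 * Real.cos θ = 4 * Real.sin (θ / 2) ^ 2 := by linarith
    have hupos : 0 < 2 - 2 * Real.cos θ := by rw [hu]; positivity
    have hupper : Real.log (2 - 2 * Real.cos θ) ≤ Real.log 4 :=
      Real.log_le_log hupos (by nlinarith [Real.neg_one_le_cos θ])
    have hsq : (θ / Real.pi) ^ 2 ≤ Real.sin (θ / 2) ^ 2 :=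
      pow_le_pow_left₀ (div_nonneg h0.le hπ.le) hub 2
    have hlower' : 4 * (θ / Real.pi) ^ 2 ≤ 2 - 2 * Real.cos θ := by rw [hu]; linarith
    have hlog_lower : Real.log 4 + 2 * (Real.log θ - Real.log Real.pi)
        ≤ Real.log (2 - 2 * Real.cos θ) := by
      have h1 : Real.log (4 * (θ / Real.pi) ^ 2) ≤ Real.log (2 - 2 * Real.cos θ) :=
        Real.log_le_log (by positivity) hlower'
      rw [Real.log_mul (by norm_num) (by positivity), Real.log_pow,
        Real.log_div h0.ne' hπ.ne'] at h1
      push_cast at h1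
      linarith
    have hrp : (0:ℝ) ≤ θ ^ (-(1/2) : ℝ) := Real.rpow_nonneg h0.le _
    have hneg : -Real.log θ ≤ 2 * θ ^ (-(1/2) : ℝ) := by
      have e1 : Real.log (θ ^ (-(1/2) : ℝ)) = (-(1/2)) * Real.log θ := Real.log_rpow h0 _
      have e2 : Real.log (θ ^ (-(1/2) : ℝ)) ≤ θ ^ (-(1/2) : ℝ) := Real.log_le_self hrp
      linarith
    have hlogπ : 0 ≤ Real.log Real.pi := Real.log_nonneg (by linarith [Real.pi_gt_three])
    have hlog4 : 0 ≤ Real.log 4 := Real.log_nonneg (by norm_num)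
    have habs : |Real.log (2 - 2 * Real.cos θ)|
        ≤ (Real.log 4 + 2 * Real.log Real.pi) + 4 * θ ^ (-(1/2) : ℝ) := by
      rw [abs_le]
      constructor
      · linarith
      · linarith
    have hsk : |Real.sin θ ^ k| ≤ 1 := by
      rw [abs_pow]; exact pow_le_one₀ (abs_nonneg _) (Real.abs_sin_le_one θ)
    calc ‖Real.log (2 - 2 * Real.cos θ) * Real.sin θ ^ k‖
        = |Real.log (2 - 2 * Real.cos θ)| * |Real.sin θ ^ k| := by
          rw [Real.norm_eq_abs, abs_mul]
      _ ≤ |Real.log (2 - 2 * Real.cos θ)| * 1 :=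
          mul_le_mul_of_nonneg_left hsk (abs_nonneg _)
      _ ≤ (Real.log 4 + 2 * Real.log Real.pi) + 4 * θ ^ (-(1/2) : ℝ) := by
          rw [mul_one]; exact habs

/-- Variance of the spherical average of the whole-space log-correlated Gaussian field:
`K_d(e^{−t}, e^{−t}) − 2K_d(e^{−t}, 1) + K_d(1, 1)` equals
`|t| + 2c(d) ∫₀^π log((1+e^{−2|t|}−2e^{−|t|}cos θ)/(2−2cos θ)) (sin θ)^{d−2} dθ`. -/
theorem spherical_average_variance (d : ℕ) (hd : 2 ≤ d)
    (c : ℝ)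
    (hc : c = Real.Gamma ((d : ℝ) / 2) /
      (2 * Real.sqrt Real.pi * Real.Gamma (((d : ℝ) - 1) / 2)))
    (K : ℝ → ℝ → ℝ)
    (hK : ∀ r₁ r₂ : ℝ, 0 < r₁ → 0 < r₂ →
      K r₁ r₂ = -c * ∫ θ in (0:ℝ)..Real.pi,
        Real.log (r₁ ^ 2 + r₂ ^ 2 - 2 * r₁ * r₂ * Real.cos θ) * (Real.sin θ) ^ (d - 2))
    (t : ℝ) :
    K (Real.exp (-t)) (Real.exp (-t)) - 2 * K (Real.exp (-t)) 1 + K 1 1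
      = |t| + 2 * c *
          ∫ θ in (0:ℝ)..Real.pi,
            Real.log ((1 + Real.exp (-(2 * |t|)) - 2 * Real.exp (-|t|) * Real.cos θ) /
                (2 - 2 * Real.cos θ)) * (Real.sin θ) ^ (d - 2) := by
  have hπ := Real.pi_pos
  have hCint := aux_integrable_log (d - 2)
  -- positivity of the denominator on (0, π]
  have hu : ∀ θ ∈ Set.Ioc (0:ℝ) Real.pi, 0 < 2 - 2 * Real.cos θ := by
    rintro θ ⟨h0, hπ'⟩
    have hs2 : 0 < Real.sin (θ / 2) :=
      Real.sin_pos_of_pos_of_lt_pi (by linarith) (by linarith)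
    have hkey : Real.sin (θ / 2) ^ 2 = 1 / 2 - Real.cos θ / 2 := by
      have h := Real.sin_sq_eq_half_sub (θ / 2)
      rwa [show 2 * (θ / 2) = θ by ring] at h
    nlinarith
  -- value of the sin-power integral
  have hd2 : (2:ℝ) ≤ (d:ℝ) := by exact_mod_cast hd
  have hI : (∫ θ in (0:ℝ)..Real.pi, Real.sin θ ^ (d - 2))
      = Real.sqrt Real.pi * Real.Gamma (((d:ℝ) - 1) / 2) / Real.Gamma ((d:ℝ) / 2) := by
    have h := aux_sinpow_gamma (d - 2)
    have hc2 : ((d - 2 : ℕ) : ℝ) = (d:ℝ) - 2 := by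
      have := Nat.cast_sub hd (R := ℝ); push_cast at this ⊢; linarith
    rw [h, hc2, show ((d:ℝ) - 2 + 1) / 2 = ((d:ℝ) - 1) / 2 by ring,
      show ((d:ℝ) - 2 + 2) / 2 = (d:ℝ) / 2 by ring]
  have hcI : c * (∫ θ in (0:ℝ)..Real.pi, Real.sin θ ^ (d - 2)) = 1 / 2 := by
    rw [hI, hc]
    have hsπ : Real.sqrt Real.pi ≠ 0 := (Real.sqrt_pos.mpr hπ).ne'
    have hg1 : Real.Gamma ((d:ℝ) / 2) ≠ 0 := (Real.Gamma_pos_of_pos (by linarith)).ne'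
    have hg2 : Real.Gamma (((d:ℝ) - 1) / 2) ≠ 0 := (Real.Gamma_pos_of_pos (by linarith)).ne'
    field_simp
  -- pointwise identity for the cross term
  have hBpt : ∀ θ : ℝ,
      Real.log (Real.exp (-t) ^ 2 + 1 ^ 2 - 2 * Real.exp (-t) * 1 * Real.cos θ)
        = (|t| - t) + Real.log (Real.exp (-|t|) ^ 2 + 1 - 2 * Real.exp (-|t|) * Real.cos θ) := by
    intro θ
    rcases abs_cases t with ⟨h1, _⟩ | ⟨h1, h2⟩
    · rw [h1]; ring_nf
    · rw [h1]
      have hxy : Real.exp (-t) * Real.exp t = 1 := by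
        rw [← Real.exp_add]; simp
      have het : Real.exp t < 1 := Real.exp_lt_one_iff.mpr h2
      have hBpos : 0 < Real.exp t ^ 2 + 1 - 2 * Real.exp t * Real.cos θ := by
        have h3 : 0 < (1 - Real.exp t) ^ 2 := pow_pos (by linarith) 2
        have h4 : 0 ≤ Real.exp t * (1 - Real.cos θ) :=
          mul_nonneg (Real.exp_pos t).le (by linarith [Real.cos_le_one θ])
        nlinarith
      have hfac : Real.exp (-t) ^ 2 + 1 ^ 2 - 2 * Real.exp (-t) * 1 * Real.cos θ
          = Real.exp (-t + -t) * (Real.exp t ^ 2 + 1 - 2 * Real.exp t * Real.cos θ) := by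
        rw [Real.exp_add]
        linear_combination
          (-(1 + Real.exp (-t) * Real.exp t - 2 * Real.exp (-t) * Real.cos θ)) * hxy
      rw [hfac, Real.log_mul (Real.exp_ne_zero _) hBpos.ne', Real.log_exp]
      rw [show -t - t = -t + -t by ring, show -(-t) = t by ring]
  -- integrability of the B integrand
  have hBint : IntervalIntegrable
      (fun θ : ℝ => Real.log (Real.exp (-|t|) ^ 2 + 1 - 2 * Real.exp (-|t|) * Real.cos θ)
        * Real.sin θ ^ (d - 2)) MeasureTheory.volume 0 Real.pi := by
    rcases eq_or_ne t 0 with h | h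
    · subst h
      have heq : (fun θ : ℝ =>
          Real.log (Real.exp (-|(0:ℝ)|) ^ 2 + 1 - 2 * Real.exp (-|(0:ℝ)|) * Real.cos θ)
            * Real.sin θ ^ (d - 2))
          = fun θ : ℝ => Real.log (2 - 2 * Real.cos θ) * Real.sin θ ^ (d - 2) := by
        funext θ
        norm_num
      rw [heq]; exact hCint
    · apply ContinuousOn.intervalIntegrable
      apply ContinuousOn.mul
      · apply ContinuousOn.log (by fun_prop)
        intro θ _
        have hρ1 : Real.exp (-|t|) < 1 := Real.exp_lt_one_iff.mpr (by simpa using abs_pos.mpr h)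
        have h3 : 0 < (1 - Real.exp (-|t|)) ^ 2 := pow_pos (by linarith) 2
        have h4 : 0 ≤ Real.exp (-|t|) * (1 - Real.cos θ) :=
          mul_nonneg (Real.exp_pos _).le (by linarith [Real.cos_le_one θ])
        nlinarith
      · fun_prop
  -- K (e^{-t}) (e^{-t})
  have hKrr : K (Real.exp (-t)) (Real.exp (-t))
      = -c * ((-(2 * t)) * (∫ θ in (0:ℝ)..Real.pi, Real.sin θ ^ (d - 2))
        + ∫ θ in (0:ℝ)..Real.pi, Real.log (2 - 2 * Real.cos θ) * Real.sin θ ^ (d - 2)) := by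
    rw [hK _ _ (Real.exp_pos _) (Real.exp_pos _)]
    have h1 : (∫ θ in (0:ℝ)..Real.pi,
        Real.log (Real.exp (-t) ^ 2 + Real.exp (-t) ^ 2
          - 2 * Real.exp (-t) * Real.exp (-t) * Real.cos θ) * Real.sin θ ^ (d - 2))
        = ∫ θ in (0:ℝ)..Real.pi,
          (Real.log (Real.exp (-t) ^ 2) + Real.log (2 - 2 * Real.cos θ))
            * Real.sin θ ^ (d - 2) := by
      apply intervalIntegral.integral_congr_ae
      filter_upwards with θ hθ
      rw [Set.uIoc_of_le hπ.le] at hθ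
      have hden := hu θ hθ
      rw [show Real.exp (-t) ^ 2 + Real.exp (-t) ^ 2
            - 2 * Real.exp (-t) * Real.exp (-t) * Real.cos θ
          = Real.exp (-t) ^ 2 * (2 - 2 * Real.cos θ) by ring,
        Real.log_mul (by positivity) hden.ne']
    rw [h1]
    simp_rw [add_mul]
    rw [intervalIntegral.integral_add (Continuous.intervalIntegrable (by fun_prop) _ _) hCint,
      intervalIntegral.integral_const_mul, Real.log_pow, Real.log_exp]
    push_cast
    ring
  -- K (e^{-t}) 1
  have hKr1 : K (Real.exp (-t)) 1
      = -c * ((|t| - t) * (∫ θ in (0:ℝ)..Real.pi, Real.sin θ ^ (d - 2))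
        + ∫ θ in (0:ℝ)..Real.pi,
            Real.log (Real.exp (-|t|) ^ 2 + 1 - 2 * Real.exp (-|t|) * Real.cos θ)
              * Real.sin θ ^ (d - 2)) := by
    rw [hK _ _ (Real.exp_pos _) one_pos]
    have h1 : (∫ θ in (0:ℝ)..Real.pi,
        Real.log (Real.exp (-t) ^ 2 + 1 ^ 2 - 2 * Real.exp (-t) * 1 * Real.cos θ)
          * Real.sin θ ^ (d - 2))
        = ∫ θ in (0:ℝ)..Real.pi,
          ((|t| - t) + Real.log (Real.exp (-|t|) ^ 2 + 1 - 2 * Real.exp (-|t|) * Real.cos θ))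
            * Real.sin θ ^ (d - 2) :=
      intervalIntegral.integral_congr fun θ _ => by rw [hBpt θ]
    rw [h1]
    simp_rw [add_mul]
    rw [intervalIntegral.integral_add (Continuous.intervalIntegrable (by fun_prop) _ _) hBint,
      intervalIntegral.integral_const_mul]
  -- K 1 1
  have hK11 : K 1 1
      = -c * ∫ θ in (0:ℝ)..Real.pi, Real.log (2 - 2 * Real.cos θ) * Real.sin θ ^ (d - 2) := by
    rw [hK 1 1 one_pos one_pos]
    congr 1
    apply intervalIntegral.integral_congr
    intro θ _
    norm_num
  -- the RHS integral
  have hD : (∫ θ in (0:ℝ)..Real.pi,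
      Real.log ((1 + Real.exp (-(2 * |t|)) - 2 * Real.exp (-|t|) * Real.cos θ) /
          (2 - 2 * Real.cos θ)) * Real.sin θ ^ (d - 2))
      = (∫ θ in (0:ℝ)..Real.pi,
          Real.log (Real.exp (-|t|) ^ 2 + 1 - 2 * Real.exp (-|t|) * Real.cos θ)
            * Real.sin θ ^ (d - 2))
        - ∫ θ in (0:ℝ)..Real.pi, Real.log (2 - 2 * Real.cos θ) * Real.sin θ ^ (d - 2) := by
    have h1 : (∫ θ in (0:ℝ)..Real.pi,
        Real.log ((1 + Real.exp (-(2 * |t|)) - 2 * Real.exp (-|t|) * Real.cos θ) /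
            (2 - 2 * Real.cos θ)) * Real.sin θ ^ (d - 2))
        = ∫ θ in (0:ℝ)..Real.pi,
          (Real.log (Real.exp (-|t|) ^ 2 + 1 - 2 * Real.exp (-|t|) * Real.cos θ)
            - Real.log (2 - 2 * Real.cos θ)) * Real.sin θ ^ (d - 2) := by
      apply intervalIntegral.integral_congr_ae
      filter_upwards with θ hθ
      rw [Set.uIoc_of_le hπ.le] at hθ
      have hden := hu θ hθ
      have hρ1 : Real.exp (-|t|) ≤ 1 := Real.exp_le_one_iff.mpr (neg_nonpos.mpr (abs_nonneg t))
      have hnum : 0 < Real.exp (-|t|) ^ 2 + 1 - 2 * Real.exp (-|t|) * Real.cos θ := by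
        have h4 : 0 < Real.exp (-|t|) * (2 - 2 * Real.cos θ) :=
          mul_pos (Real.exp_pos _) hden
        nlinarith [sq_nonneg (1 - Real.exp (-|t|))]
      have he : Real.exp (-(2 * |t|)) = Real.exp (-|t|) ^ 2 := by
        rw [sq, ← Real.exp_add]; ring_nf
      rw [he, show 1 + Real.exp (-|t|) ^ 2 - 2 * Real.exp (-|t|) * Real.cos θ
          = Real.exp (-|t|) ^ 2 + 1 - 2 * Real.exp (-|t|) * Real.cos θ by ring,
        Real.log_div hnum.ne' hden.ne']
    rw [h1]
    simp_rw [sub_mul]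
    rw [intervalIntegral.integral_sub hBint hCint]
  rw [hKrr, hKr1, hK11, hD]
  linear_combination (2 * |t|) * hcI
end

section
/- Let d ≥ 2 be an integer, c(d) := Γ(d/2)/(2√π · Γ((d−1)/2)), and for r₁, r₂ > 0 define K_d(r₁, r₂) := −c(d) ∫₀^π log(r₁² + r₂² − 2 r₁ r₂ cos θ) (sin θ)^{d−2} dθ. For (t, s) ∈ ℝ² with t ≠ s, the function G(t, s) := K_d(e^{−t}, e^{−s}) is partially differentiable in t, the partial derivative ∂_t G is partially differentiable in s, and ∂_s ∂_t G(t, s) = c(d) ∫₀^π (1 − cos θ · cosh(t − s))/(cos θ − cosh(t − s))² (sin θ)^{d−2} dθ. -/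
open Real MeasureTheory intervalIntegral Set Metric Filter

private lemma cspos {u : ℝ} (hu : u ≠ 0) (θ : ℝ) : 0 < Real.cosh u - Real.cos θ := by
  have h1 := Real.one_lt_cosh.mpr hu
  have h2 := Real.cos_le_one θ
  linarith

private lemma contF0 {u : ℝ} (hu : u ≠ 0) (n : ℕ) :
    Continuous fun θ : ℝ => Real.log (Real.cosh u - Real.cos θ) * Real.sin θ ^ n := by
  apply Continuous.mul _ (Real.continuous_sin.pow n)
  rw [continuous_iff_continuousAt]
  intro θ
  have hc : ContinuousAt (fun θ : ℝ => Real.cosh u - Real.cos θ) θ :=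
    (continuous_const.sub Real.continuous_cos).continuousAt
  exact hc.log (ne_of_gt (cspos hu θ))

private lemma contF1 {u : ℝ} (hu : u ≠ 0) (n : ℕ) :
    Continuous fun θ : ℝ => Real.sinh u / (Real.cosh u - Real.cos θ) * Real.sin θ ^ n :=
  ((continuous_const.div (continuous_const.sub Real.continuous_cos)
    (fun θ => ne_of_gt (cspos hu θ))).mul (Real.continuous_sin.pow n))

private lemma contF2 {u : ℝ} (hu : u ≠ 0) (n : ℕ) :
    Continuous fun θ : ℝ =>
      (1 - Real.cos θ * Real.cosh u) / (Real.cos θ - Real.cosh u) ^ 2 * Real.sin θ ^ n := by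
  apply Continuous.mul _ (Real.continuous_sin.pow n)
  apply Continuous.div (continuous_const.sub (Real.continuous_cos.mul continuous_const))
    ((Real.continuous_cos.sub continuous_const).pow 2)
  intro θ
  have := cspos hu θ
  exact pow_ne_zero 2 (by intro h; simp only [Pi.sub_apply] at h; linarith)

private lemma ball_abs {u₀ : ℝ} (hu : u₀ ≠ 0) {u : ℝ} (hu' : u ∈ Metric.ball u₀ (|u₀| / 2)) :
    |u₀| / 2 ≤ |u| ∧ |u| ≤ 3 * |u₀| / 2 := by
  rw [Metric.mem_ball, Real.dist_eq] at hu'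
  have h1 := abs_sub_abs_le_abs_sub u₀ u
  have h2 := abs_sub_abs_le_abs_sub u u₀
  rw [abs_sub_comm] at h1
  constructor <;> linarith

private lemma ball_cosh_lb {u₀ : ℝ} (hu : u₀ ≠ 0) {u : ℝ}
    (hu' : u ∈ Metric.ball u₀ (|u₀| / 2)) (θ : ℝ) :
    Real.cosh (|u₀| / 2) - 1 ≤ Real.cosh u - Real.cos θ := by
  have h1 : Real.cosh (|u₀| / 2) ≤ Real.cosh u := by
    rw [Real.cosh_le_cosh, abs_of_nonneg (by positivity)]
    exact (ball_abs hu hu').1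
  have h2 := Real.cos_le_one θ
  linarith

private lemma m_pos {u₀ : ℝ} (hu : u₀ ≠ 0) : 0 < Real.cosh (|u₀| / 2) - 1 := by
  have : (1:ℝ) < Real.cosh (|u₀| / 2) := Real.one_lt_cosh.mpr (by simp [hu, abs_eq_zero])
  linarith

private lemma ball_ne {u₀ : ℝ} (hu : u₀ ≠ 0) {u : ℝ}
    (hu' : u ∈ Metric.ball u₀ (|u₀| / 2)) : u ≠ 0 := by
  have := (ball_abs hu hu').1
  have h0 : 0 < |u₀| := abs_pos.mpr hu
  intro h; rw [h, abs_zero] at this; linarith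

noncomputable def covF (n : ℕ) (u : ℝ) : ℝ :=
  ∫ θ in (0:ℝ)..Real.pi, Real.log (Real.cosh u - Real.cos θ) * Real.sin θ ^ n

noncomputable def covF1 (n : ℕ) (u : ℝ) : ℝ :=
  ∫ θ in (0:ℝ)..Real.pi, Real.sinh u / (Real.cosh u - Real.cos θ) * Real.sin θ ^ n

noncomputable def covF2 (n : ℕ) (u : ℝ) : ℝ :=
  ∫ θ in (0:ℝ)..Real.pi,
    (1 - Real.cos θ * Real.cosh u) / (Real.cos θ - Real.cosh u) ^ 2 * Real.sin θ ^ n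

private lemma key1 (n : ℕ) {u₀ : ℝ} (hu : u₀ ≠ 0) :
    HasDerivAt (covF n) (covF1 n u₀) u₀ := by
  have hε : (0:ℝ) < |u₀| / 2 := by have := abs_pos.mpr hu; linarith
  have hm := m_pos hu
  have key := intervalIntegral.hasDerivAt_integral_of_dominated_loc_of_deriv_le
    (F := fun u θ => Real.log (Real.cosh u - Real.cos θ) * Real.sin θ ^ n)
    (F' := fun u θ => Real.sinh u / (Real.cosh u - Real.cos θ) * Real.sin θ ^ n)
    (a := 0) (b := Real.pi) (μ := volume) (x₀ := u₀)
    (bound := fun _ => Real.sinh (3 * |u₀| / 2) / (Real.cosh (|u₀| / 2) - 1))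
    (Metric.ball_mem_nhds u₀ hε) ?_ ?_ ?_ ?_ ?_ ?_
  · exact key.2
  · filter_upwards with u
    exact ((Real.measurable_log.comp
      ((measurable_const.sub Real.measurable_cos))).mul
      (Real.measurable_sin.pow_const n)).aestronglyMeasurable
  · exact (contF0 hu n).intervalIntegrable _ _
  · exact ((contF1 hu n).aestronglyMeasurable)
  · filter_upwards with θ
    intro _ u hu'
    have hne := ball_ne hu hu'
    have hlb := ball_cosh_lb hu hu' θ
    have hpos := cspos hne θ
    rw [norm_mul, Real.norm_eq_abs, Real.norm_eq_abs, abs_div]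
    have h1 : |Real.sin θ ^ n| ≤ 1 := by
      rw [abs_pow]; exact pow_le_one₀ (abs_nonneg _) (abs_le.mpr ⟨Real.neg_one_le_sin θ, Real.sin_le_one θ⟩)
    have h2 : |Real.sinh u| ≤ Real.sinh (3 * |u₀| / 2) := by
      rw [Real.abs_sinh]
      exact Real.sinh_le_sinh.mpr (ball_abs hu hu').2
    have h3 : |Real.cosh u - Real.cos θ| = Real.cosh u - Real.cos θ := abs_of_pos hpos
    calc |Real.sinh u| / |Real.cosh u - Real.cos θ| * |Real.sin θ ^ n|
        ≤ |Real.sinh u| / |Real.cosh u - Real.cos θ| * 1 := by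
          apply mul_le_mul_of_nonneg_left h1 (by positivity)
      _ = |Real.sinh u| / (Real.cosh u - Real.cos θ) := by rw [h3, mul_one]
      _ ≤ Real.sinh (3 * |u₀| / 2) / (Real.cosh (|u₀| / 2) - 1) := by
          apply div_le_div₀ (le_trans (abs_nonneg _) h2) h2 hm hlb
  · exact intervalIntegrable_const
  · filter_upwards with θ
    intro _ u hu'
    have hne := ball_ne hu hu'
    exact (((Real.hasDerivAt_cosh u).sub_const (Real.cos θ)).log
      (ne_of_gt (cspos hne θ))).mul_const _

private lemma deriv_quot {u θ : ℝ} (hu : u ≠ 0) :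
    HasDerivAt (fun u => Real.sinh u / (Real.cosh u - Real.cos θ) * Real.sin θ ^ n0)
      ((1 - Real.cos θ * Real.cosh u) / (Real.cos θ - Real.cosh u) ^ 2 * Real.sin θ ^ n0) u := by
  have h := ((Real.hasDerivAt_sinh u).div
    ((Real.hasDerivAt_cosh u).sub_const (Real.cos θ)) (ne_of_gt (cspos hu θ))).mul_const
    (Real.sin θ ^ n0)
  refine h.congr_deriv ?_
  congr 1
  have hc := Real.cosh_sq_sub_sinh_sq u
  have hd : (Real.cos θ - Real.cosh u) ^ 2 = (Real.cosh u - Real.cos θ) ^ 2 := by ring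
  rw [hd]
  congr 1
  nlinarith [hc]

private lemma key2 (n : ℕ) {u₀ : ℝ} (hu : u₀ ≠ 0) :
    HasDerivAt (covF1 n) (covF2 n u₀) u₀ := by
  have hε : (0:ℝ) < |u₀| / 2 := by have := abs_pos.mpr hu; linarith
  have hm := m_pos hu
  have key := intervalIntegral.hasDerivAt_integral_of_dominated_loc_of_deriv_le
    (F := fun u θ => Real.sinh u / (Real.cosh u - Real.cos θ) * Real.sin θ ^ n)
    (F' := fun u θ =>
      (1 - Real.cos θ * Real.cosh u) / (Real.cos θ - Real.cosh u) ^ 2 * Real.sin θ ^ n)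
    (a := 0) (b := Real.pi) (μ := volume) (x₀ := u₀)
    (bound := fun _ => (1 + Real.cosh (3 * |u₀| / 2)) / (Real.cosh (|u₀| / 2) - 1) ^ 2)
    (Metric.ball_mem_nhds u₀ hε) ?_ ?_ ?_ ?_ ?_ ?_
  · exact key.2
  · filter_upwards with u
    exact ((Real.measurable_sinh.comp measurable_const).div
      ((measurable_const.sub Real.measurable_cos)) |>.mul
      (Real.measurable_sin.pow_const n)).aestronglyMeasurable
  · exact (contF1 hu n).intervalIntegrable _ _
  · exact (contF2 hu n).aestronglyMeasurable
  · filter_upwards with θ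
    intro _ u hu'
    have hne := ball_ne hu hu'
    have hlb := ball_cosh_lb hu hu' θ
    have hpos := cspos hne θ
    rw [norm_mul, Real.norm_eq_abs, Real.norm_eq_abs, abs_div]
    have h1 : |Real.sin θ ^ n| ≤ 1 := by
      rw [abs_pow]
      exact pow_le_one₀ (abs_nonneg _) (abs_le.mpr ⟨Real.neg_one_le_sin θ, Real.sin_le_one θ⟩)
    have h2 : |1 - Real.cos θ * Real.cosh u| ≤ 1 + Real.cosh (3 * |u₀| / 2) := by
      have hcu : Real.cosh u ≤ Real.cosh (3 * |u₀| / 2) := by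
        rw [Real.cosh_le_cosh,
          abs_of_nonneg (show (0:ℝ) ≤ 3 * |u₀| / 2 by positivity)]
        exact (ball_abs hu hu').2
      have hcos := abs_le.mpr ⟨Real.neg_one_le_cos θ, Real.cos_le_one θ⟩
      have := Real.cosh_pos (x := u)
      calc |1 - Real.cos θ * Real.cosh u| ≤ 1 + |Real.cos θ * Real.cosh u| := by
            have := abs_sub (1:ℝ) (Real.cos θ * Real.cosh u)
            calc |1 - Real.cos θ * Real.cosh u| ≤ |(1:ℝ)| + |Real.cos θ * Real.cosh u| :=
                  abs_sub _ _
              _ = 1 + |Real.cos θ * Real.cosh u| := by rw [abs_one]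
        _ ≤ 1 + Real.cosh (3 * |u₀| / 2) := by
            rw [abs_mul, abs_of_pos (Real.cosh_pos u)]
            nlinarith [abs_nonneg (Real.cos θ)]
    have h3 : (Real.cosh (|u₀| / 2) - 1) ^ 2 ≤ |(Real.cos θ - Real.cosh u) ^ 2| := by
      rw [abs_of_nonneg (sq_nonneg (Real.cos θ - Real.cosh u)), show (Real.cos θ - Real.cosh u) ^ 2
        = (Real.cosh u - Real.cos θ) ^ 2 by ring]
      exact pow_le_pow_left₀ (le_of_lt hm) hlb 2
    calc |1 - Real.cos θ * Real.cosh u| / |(Real.cos θ - Real.cosh u) ^ 2| * |Real.sin θ ^ n|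
        ≤ |1 - Real.cos θ * Real.cosh u| / |(Real.cos θ - Real.cosh u) ^ 2| * 1 := by
          apply mul_le_mul_of_nonneg_left h1 (by positivity)
      _ = |1 - Real.cos θ * Real.cosh u| / |(Real.cos θ - Real.cosh u) ^ 2| := mul_one _
      _ ≤ (1 + Real.cosh (3 * |u₀| / 2)) / (Real.cosh (|u₀| / 2) - 1) ^ 2 :=
          div_le_div₀ (le_trans (abs_nonneg _) h2) h2 (by positivity) h3
  · exact intervalIntegrable_const
  · filter_upwards with θ
    intro _ u hu'
    exact deriv_quot (ball_ne hu hu')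

/-- The covariance of the spherical average process `G(t, s) = K_d(e^{−t}, e^{−s})` is
partially differentiable in `t`, its partial derivative is partially differentiable in `s`
off the diagonal, and the mixed second partial derivative equals
`c(d) ∫₀^π (1 − cos θ cosh(t−s))/(cos θ − cosh(t−s))² (sin θ)^{d−2} dθ`. -/
theorem mixed_partial_derivative_spherical_covariance (d : ℕ) (hd : 2 ≤ d)
    (c : ℝ)
    (hc : c = Real.Gamma ((d : ℝ) / 2) /
      (2 * Real.sqrt Real.pi * Real.Gamma (((d : ℝ) - 1) / 2)))
    (G : ℝ → ℝ → ℝ)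
    (hG : ∀ t s : ℝ, G t s = -c * ∫ θ in (0:ℝ)..Real.pi,
      Real.log ((Real.exp (-t)) ^ 2 + (Real.exp (-s)) ^ 2 -
        2 * Real.exp (-t) * Real.exp (-s) * Real.cos θ) * (Real.sin θ) ^ (d - 2))
    (t s : ℝ) (hts : t ≠ s) :
    DifferentiableAt ℝ (fun t' => G t' s) t ∧
    DifferentiableAt ℝ (fun s' => deriv (fun t' => G t' s') t) s ∧
    deriv (fun s' => deriv (fun t' => G t' s') t) s
      = c * ∫ θ in (0:ℝ)..Real.pi,
          (1 - Real.cos θ * Real.cosh (t - s)) / (Real.cos θ - Real.cosh (t - s)) ^ 2 *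
            (Real.sin θ) ^ (d - 2) := by
  set n := d - 2 with hn
  set I₀ : ℝ := ∫ θ in (0:ℝ)..Real.pi, Real.sin θ ^ n with hI₀
  -- Rewriting of G off the diagonal
  have hGeq : ∀ t' s' : ℝ, t' ≠ s' →
      G t' s' = -c * ((Real.log 2 - (t' + s')) * I₀ + covF n (t' - s')) := by
    intro t' s' h
    have hud : t' - s' ≠ 0 := sub_ne_zero.mpr h
    rw [hG]
    congr 1
    have hint : ∀ θ : ℝ, (Real.exp (-t')) ^ 2 + (Real.exp (-s')) ^ 2 -
        2 * Real.exp (-t') * Real.exp (-s') * Real.cos θ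
        = 2 * Real.exp (-(t' + s')) * (Real.cosh (t' - s') - Real.cos θ) := by
      intro θ
      rw [Real.cosh_eq]
      have e1 : Real.exp (-(t' + s')) * Real.exp (t' - s') = Real.exp (-s') ^ 2 := by
        rw [← Real.exp_add, sq, ← Real.exp_add]; congr 1; ring
      have e2 : Real.exp (-(t' + s')) * Real.exp (-(t' - s')) = Real.exp (-t') ^ 2 := by
        rw [← Real.exp_add, sq, ← Real.exp_add]; congr 1; ring
      have e3 : Real.exp (-(t' + s')) = Real.exp (-t') * Real.exp (-s') := by
        rw [← Real.exp_add]; congr 1; ring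
      linear_combination -e1 - e2 + 2 * Real.cos θ * e3
    have hlog : ∀ θ : ℝ, Real.log ((Real.exp (-t')) ^ 2 + (Real.exp (-s')) ^ 2 -
        2 * Real.exp (-t') * Real.exp (-s') * Real.cos θ) * Real.sin θ ^ n
        = (Real.log 2 - (t' + s')) * Real.sin θ ^ n
          + Real.log (Real.cosh (t' - s') - Real.cos θ) * Real.sin θ ^ n := by
      intro θ
      rw [hint θ, Real.log_mul (by positivity) (ne_of_gt (cspos hud θ)),
        Real.log_mul two_ne_zero (Real.exp_ne_zero _), Real.log_exp]
      ring
    rw [show (fun θ => Real.log ((Real.exp (-t')) ^ 2 + (Real.exp (-s')) ^ 2 -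
        2 * Real.exp (-t') * Real.exp (-s') * Real.cos θ) * Real.sin θ ^ n)
      = fun θ => (Real.log 2 - (t' + s')) * Real.sin θ ^ n
          + Real.log (Real.cosh (t' - s') - Real.cos θ) * Real.sin θ ^ n
      from funext hlog]
    rw [intervalIntegral.integral_add
      ((show Continuous (fun θ : ℝ => (Real.log 2 - (t' + s')) * Real.sin θ ^ n) from
        continuous_const.mul (Real.continuous_sin.pow n)).intervalIntegrable _ _)
      ((contF0 hud n).intervalIntegrable _ _),
      intervalIntegral.integral_const_mul]
    rfl
  have hu : t - s ≠ 0 := sub_ne_zero.mpr hts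
  -- derivative in t
  have hHt : ∀ s' : ℝ, s' ≠ t →
      HasDerivAt (fun t' => G t' s') (-c * (-I₀ + covF1 n (t - s'))) t := by
    intro s' hs'
    have hud : t - s' ≠ 0 := sub_ne_zero.mpr (Ne.symm hs')
    have h2 : HasDerivAt (fun t' : ℝ => covF n (t' - s')) (covF1 n (t - s') * 1) t :=
      by have := (key1 n hud).comp t ((hasDerivAt_id t).sub_const s'); exact this
    have h1 : HasDerivAt (fun t' : ℝ => (Real.log 2 - (t' + s')) * I₀) ((-1) * I₀) t :=
      (((hasDerivAt_id t).add_const s').const_sub (Real.log 2)).mul_const I₀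
    have h3 := (h1.add h2).const_mul (-c)
    have h4 : -c * ((-1) * I₀ + covF1 n (t - s') * 1) = -c * (-I₀ + covF1 n (t - s')) := by
      ring
    rw [h4] at h3
    apply h3.congr_of_eventuallyEq
    filter_upwards [isOpen_ne.mem_nhds (show t ≠ s' from Ne.symm hs')] with x hx
    exact hGeq x s' hx
  have hDs : ∀ s' : ℝ, s' ≠ t →
      deriv (fun t' => G t' s') t = -c * (-I₀ + covF1 n (t - s')) :=
    fun s' h => (hHt s' h).deriv
  -- derivative in s of the t-derivative
  have hD : HasDerivAt (fun s' : ℝ => -c * (-I₀ + covF1 n (t - s'))) (c * covF2 n (t - s)) s := by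
    have h2 : HasDerivAt (fun s' : ℝ => covF1 n (t - s')) (covF2 n (t - s) * (-1)) s :=
      (key2 n hu).comp s ((hasDerivAt_id s).const_sub t)
    have h3 := ((hasDerivAt_const s (-I₀)).add h2).const_mul (-c)
    have h4 : -c * (0 + covF2 n (t - s) * (-1)) = c * covF2 n (t - s) := by ring
    rw [h4] at h3
    exact h3
  have heq : (fun s' => deriv (fun t' => G t' s') t)
      =ᶠ[nhds s] fun s' => -c * (-I₀ + covF1 n (t - s')) := by
    filter_upwards [isOpen_ne.mem_nhds (show s ≠ t from Ne.symm hts)] with x hx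
    exact hDs x hx
  refine ⟨(hHt s (Ne.symm hts)).differentiableAt, ?_, ?_⟩
  · exact (heq.differentiableAt_iff).mpr hD.differentiableAt
  · rw [heq.deriv_eq, hD.deriv]
    rfl
end

section
/- Let p ≥ 1 be an integer and let λ₁, …, λ_p be distinct positive real numbers. Let A be the p × p Frobenius companion matrix of the monic polynomial ∏_{k=1}^p (λ + λ_k), let β ∈ ℝ with β ≠ 0, and let Ā and b̄ ∈ ℝ^{p+1} be the augmented matrix and vector: Ā is the (p+1) × (p+1) block matrix with top-left entry 0, top-right row e₁ᵀ = (1, 0, …, 0), bottom-left column 0 and bottom-right block A, and b̄ := β e_{p+1}. For t > 0 set Σ_t := ∫₀^t (exp(sĀ) b̄)(exp(sĀ) b̄)ᵀ ds. Then: (i) Σ_t is positive definite (in particular invertible) for every t > 0; and (ii) for every R > 0, lim_{t → ∞} sup_{x, y ∈ ℝ^{p+1}, ‖x‖ ≤ R, ‖y‖ ≤ R} ⟨Σ_t^{−1} exp(tĀ)(x − y), exp(tĀ)(x − y)⟩ = 0. -/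
open Matrix MeasureTheory Polynomial

lemma aux_poly_core {ι : Type*} [Fintype ι] [DecidableEq ι] (z d : ι → ℝ) (j : ι) :
    ∑ k ∈ Finset.range (Fintype.card ι),
      (∏ m ∈ Finset.univ.erase j, (X - C (z m))).coeff k * (∑ m, d m * z m ^ k)
      = d j * ∏ m ∈ Finset.univ.erase j, (z j - z m) := by
  set P : ℝ[X] := ∏ m ∈ Finset.univ.erase j, (X - C (z m)) with hP
  have hdeg : P.natDegree < Fintype.card ι := by
    have h1 : P.natDegree = ∑ m ∈ Finset.univ.erase j, (X - C (z m)).natDegree := by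
      rw [hP, Polynomial.natDegree_prod]
      intro m _; exact X_sub_C_ne_zero _
    have h2 : P.natDegree = Fintype.card ι - 1 := by
      rw [h1]; simp [Polynomial.natDegree_X_sub_C, Finset.card_erase_of_mem, Finset.card_univ]
    have h3 : 0 < Fintype.card ι := Fintype.card_pos_iff.mpr ⟨j⟩
    omega
  have heval : ∀ m : ι, P.eval (z m) = ∏ m' ∈ Finset.univ.erase j, (z m - z m') := by
    intro m; rw [hP, Polynomial.eval_prod]; simp
  calc ∑ k ∈ Finset.range (Fintype.card ι), P.coeff k * (∑ m, d m * z m ^ k)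
      = ∑ k ∈ Finset.range (Fintype.card ι), ∑ m, P.coeff k * (d m * z m ^ k) := by
        refine Finset.sum_congr rfl fun k _ => ?_; rw [Finset.mul_sum]
    _ = ∑ m, ∑ k ∈ Finset.range (Fintype.card ι), P.coeff k * (d m * z m ^ k) :=
        Finset.sum_comm
    _ = ∑ m, d m * ∑ k ∈ Finset.range (Fintype.card ι), P.coeff k * z m ^ k := by
        refine Finset.sum_congr rfl fun m _ => ?_
        rw [Finset.mul_sum]
        refine Finset.sum_congr rfl fun k _ => ?_; ring
    _ = ∑ m, d m * P.eval (z m) := by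
        refine Finset.sum_congr rfl fun m _ => ?_
        rw [Polynomial.eval_eq_sum_range' hdeg]
    _ = d j * P.eval (z j) := by
        refine Finset.sum_eq_single j (fun m _ hm => ?_) (by simp)
        rw [heval m, Finset.prod_eq_zero (Finset.mem_erase.mpr ⟨hm, Finset.mem_univ m⟩) (by ring),
          mul_zero]
    _ = d j * ∏ m ∈ Finset.univ.erase j, (z j - z m) := by rw [heval j]

lemma aux_poly_zero {ι : Type*} [Fintype ι] [DecidableEq ι] {z d : ι → ℝ}
    (hz : Function.Injective z)
    (hrel : ∀ k < Fintype.card ι, ∑ m, d m * z m ^ k = 0) : ∀ j, d j = 0 := by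
  intro j
  have h := aux_poly_core z d j
  rw [Finset.sum_congr rfl (fun k hk => by
    rw [hrel k (Finset.mem_range.mp hk), mul_zero])] at h
  rw [Finset.sum_const_zero] at h
  have hne : ∏ m ∈ Finset.univ.erase j, (z j - z m) ≠ 0 := by
    rw [Finset.prod_ne_zero_iff]
    intro m hm
    have : m ≠ j := (Finset.mem_erase.mp hm).1
    exact sub_ne_zero.mpr fun he => this (hz he.symm)
  rcases mul_eq_zero.mp h.symm with h' | h'
  · exact h'
  · exact absurd h' hne

lemma aux_poly_ne {ι : Type*} [Fintype ι] [DecidableEq ι] {z d : ι → ℝ} {β : ℝ}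
    (hz : Function.Injective z) (hβ : β ≠ 0)
    (hrel : ∀ k < Fintype.card ι, ∑ m, d m * z m ^ k
      = if k = Fintype.card ι - 1 then β else 0) : ∀ j, d j ≠ 0 := by
  intro j
  have h := aux_poly_core z d j
  have hcard : 0 < Fintype.card ι := Fintype.card_pos_iff.mpr ⟨j⟩
  set P : ℝ[X] := ∏ m ∈ Finset.univ.erase j, (X - C (z m)) with hP
  have hmonic : P.Monic := monic_prod_of_monic _ _ fun m _ => monic_X_sub_C _
  have hdeg : P.natDegree = Fintype.card ι - 1 := by
    rw [hP, Polynomial.natDegree_prod _ _ (fun m _ => X_sub_C_ne_zero _)]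
    simp [Polynomial.natDegree_X_sub_C, Finset.card_erase_of_mem, Finset.card_univ]
  rw [Finset.sum_congr rfl (fun k hk => by rw [hrel k (Finset.mem_range.mp hk)])] at h
  rw [Finset.sum_congr rfl (fun k _ => by rw [mul_ite, mul_zero]),
    Finset.sum_ite_eq' (Finset.range (Fintype.card ι)) (Fintype.card ι - 1)
      (fun k => P.coeff k * β), if_pos (Finset.mem_range.mpr (by omega))] at h
  have hlead : P.coeff (Fintype.card ι - 1) = 1 := by
    have := hmonic.coeff_natDegree
    rwa [hdeg] at this
  rw [hlead, one_mul] at h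
  intro h0
  rw [h0, zero_mul] at h
  exact hβ h

lemma aux_exp_eig {n : Type*} [Fintype n] [DecidableEq n] (M : Matrix n n ℝ) (u : n → ℝ) (μ : ℝ)
    (hu : M *ᵥ u = μ • u) : NormedSpace.exp M *ᵥ u = Real.exp μ • u := by
  letI : NormedRing (Matrix n n ℝ) := Matrix.linftyOpNormedRing
  letI : NormedAlgebra ℝ (Matrix n n ℝ) := Matrix.linftyOpNormedAlgebra
  have hpow : ∀ k : ℕ, (M ^ k) *ᵥ u = (μ ^ k) • u := by
    intro k; induction k with
    | zero => simp
    | succ k ih =>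
      rw [pow_succ', ← Matrix.mulVec_mulVec, ih, Matrix.mulVec_smul, hu, smul_smul, ← pow_succ]
  let L : Matrix n n ℝ →ₗ[ℝ] (n → ℝ) :=
    { toFun := fun A => A *ᵥ u
      map_add' := fun A B => Matrix.add_mulVec A B u
      map_smul' := fun c A => Matrix.smul_mulVec c A u }
  let Lc : Matrix n n ℝ →L[ℝ] (n → ℝ) := LinearMap.toContinuousLinearMap L
  have h1 : NormedSpace.exp M *ᵥ u = Lc (NormedSpace.exp M) := rfl
  rw [h1, NormedSpace.exp_eq_tsum ℝ,
    Lc.map_tsum (NormedSpace.expSeries_summable' (𝕂 := ℝ) M)]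
  have h2 : ∀ k : ℕ, Lc ((k.factorial : ℝ)⁻¹ • M ^ k) = ((k.factorial : ℝ)⁻¹ * μ ^ k) • u := by
    intro k
    rw [Lc.map_smul]
    show (k.factorial : ℝ)⁻¹ • ((M ^ k) *ᵥ u) = _
    rw [hpow, smul_smul]
  rw [tsum_congr h2]
  have hs : Summable (fun k : ℕ => (k.factorial : ℝ)⁻¹ * μ ^ k) := by
    simpa [smul_eq_mul] using NormedSpace.expSeries_summable' (𝕂 := ℝ) (𝔸 := ℝ) μ
  rw [hs.tsum_smul_const]
  congr 1
  rw [Real.exp_eq_exp_ℝ, NormedSpace.exp_eq_tsum ℝ]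
  simp [smul_eq_mul]

lemma aux_integral_sq_pos {h : ℝ → ℝ} (hc : Continuous h) {t s₀ : ℝ} (ht : 0 < t)
    (hs0 : s₀ ∈ Set.Icc (0:ℝ) t) (hne : h s₀ ≠ 0) : 0 < ∫ s in (0:ℝ)..t, (h s) ^ 2 := by
  set c : ℝ := (h s₀) ^ 2 / 2 with hc'
  have hcpos : 0 < c := by positivity
  have hU : IsOpen {s : ℝ | c < (h s) ^ 2} := isOpen_lt continuous_const (hc.pow 2)
  have hs0U : s₀ ∈ {s : ℝ | c < (h s) ^ 2} := by
    have : 0 < (h s₀) ^ 2 := by positivity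
    simp only [Set.mem_setOf_eq, hc']; linarith
  obtain ⟨δ, hδ, hball⟩ := Metric.isOpen_iff.mp hU s₀ hs0U
  set a' : ℝ := max (s₀ - δ / 2) 0 with ha'
  set b' : ℝ := min (s₀ + δ / 2) t with hb'
  obtain ⟨hs00, hs0t⟩ := hs0
  have hab : a' < b' := by
    rw [ha', hb']
    apply max_lt <;> apply lt_min <;> linarith
  have ha0 : 0 ≤ a' := le_max_right _ _
  have hbt : b' ≤ t := min_le_right _ _
  have hint : ∀ u v : ℝ, IntervalIntegrable (fun s => (h s) ^ 2) volume u v :=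
    fun u v => ((hc.pow 2).intervalIntegrable u v)
  have hsplit : ∫ s in (0:ℝ)..t, (h s) ^ 2
      = (∫ s in (0:ℝ)..a', (h s) ^ 2) + ((∫ s in a'..b', (h s) ^ 2)
        + ∫ s in b'..t, (h s) ^ 2) := by
    rw [intervalIntegral.integral_add_adjacent_intervals (hint a' b') (hint b' t),
      intervalIntegral.integral_add_adjacent_intervals (hint 0 a') (hint a' t)]
  have h1 : 0 ≤ ∫ s in (0:ℝ)..a', (h s) ^ 2 :=
    intervalIntegral.integral_nonneg ha0 (fun u _ => sq_nonneg _)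
  have h3 : 0 ≤ ∫ s in b'..t, (h s) ^ 2 :=
    intervalIntegral.integral_nonneg hbt (fun u _ => sq_nonneg _)
  have h2 : c * (b' - a') ≤ ∫ s in a'..b', (h s) ^ 2 := by
    have hmono := intervalIntegral.integral_mono_on (f := fun _ => c) (g := fun s => (h s) ^ 2)
      hab.le (intervalIntegrable_const) (hint a' b') ?_
    · rw [intervalIntegral.integral_const, smul_eq_mul, mul_comm] at hmono
      exact hmono
    · intro x hx
      have hxball : x ∈ Metric.ball s₀ δ := by
        rw [Metric.mem_ball, Real.dist_eq, abs_sub_lt_iff]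
        obtain ⟨hx1, hx2⟩ := hx
        constructor
        · have : x ≤ b' := hx2
          have : b' ≤ s₀ + δ / 2 := min_le_left _ _
          linarith
        · have : a' ≤ x := hx1
          have : s₀ - δ / 2 ≤ a' := le_max_left _ _
          linarith
      exact (hball hxball).le
  have : 0 < c * (b' - a') := by
    apply mul_pos hcpos (by linarith)
  linarith [hsplit, h1, h3, h2]

lemma aux_inv_quad {n : Type*} [Fintype n] [DecidableEq n] (N : Matrix n n ℝ)
    (hN : IsUnit N.det) {m : ℝ} (hm : 0 < m)
    (hlow : ∀ w : n → ℝ, m * (w ⬝ᵥ w) ≤ w ⬝ᵥ (N *ᵥ w)) (w : n → ℝ) :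
    0 ≤ (N⁻¹ *ᵥ w) ⬝ᵥ w ∧ (N⁻¹ *ᵥ w) ⬝ᵥ w ≤ (w ⬝ᵥ w) / m := by
  set u := N⁻¹ *ᵥ w with hu
  have hw : N *ᵥ u = w := by
    rw [hu, Matrix.mulVec_mulVec, Matrix.mul_nonsing_inv _ hN, Matrix.one_mulVec]
  have h1 : m * (u ⬝ᵥ u) ≤ u ⬝ᵥ w := by
    have h1' := hlow u
    rwa [hw] at h1'
  have huu : 0 ≤ u ⬝ᵥ u := Finset.sum_nonneg fun i _ => mul_self_nonneg _
  have hww : 0 ≤ w ⬝ᵥ w := Finset.sum_nonneg fun i _ => mul_self_nonneg _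
  have h0 : 0 ≤ u ⬝ᵥ w := le_trans (by positivity) h1
  have hCS : (u ⬝ᵥ w) ^ 2 ≤ (u ⬝ᵥ u) * (w ⬝ᵥ w) := by
    have := Finset.sum_mul_sq_le_sq_mul_sq Finset.univ u w
    simp only [dotProduct, ← sq]
    convert this using 2 <;> simp [sq]
  refine ⟨h0, ?_⟩
  rcases eq_or_lt_of_le h0 with hQ | hQ
  · rw [← hQ]; positivity
  · rw [le_div_iff₀ hm]
    nlinarith [hCS, h1, hQ, huu, hww, hm]


set_option maxHeartbeats 1000000 in
/-- Mixing for the integrated multivariate Ornstein–Uhlenbeck process: with `A` the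
companion matrix of `∏ (λ + λ_k)` for distinct positive `λ_k`, `Ā, b̄` the augmented
matrix and vector, and `Σ_t = ∫₀^t (e^{sĀ}b̄)(e^{sĀ}b̄)ᵀ ds`, the matrix `Σ_t` is
positive definite (in particular invertible) for `t > 0`, and
`sup_{‖x‖,‖y‖ ≤ R} ⟨Σ_t⁻¹ e^{tĀ}(x−y), e^{tĀ}(x−y)⟩ → 0` as `t → ∞`. -/
theorem integrated_OU_mixing (p : ℕ) (hp : 1 ≤ p) (lam : Fin p → ℝ)
    (hpos : ∀ k, 0 < lam k) (hinj : Function.Injective lam)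
    (A : Matrix (Fin p) (Fin p) ℝ)
    (hA : ∀ i j : Fin p, A i j =
      if (j : ℕ) = (i : ℕ) + 1 then 1
      else if (i : ℕ) = p - 1 then
        -((∏ k : Fin p, (Polynomial.X + Polynomial.C (lam k))).coeff (j : ℕ))
      else 0)
    (β : ℝ) (hβ : β ≠ 0)
    (Abar : Matrix (Unit ⊕ Fin p) (Unit ⊕ Fin p) ℝ)
    (hAbar : Abar = Matrix.fromBlocks (0 : Matrix Unit Unit ℝ)
      (Matrix.of fun (_ : Unit) (j : Fin p) => if (j : ℕ) = 0 then (1 : ℝ) else 0)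
      (0 : Matrix (Fin p) Unit ℝ) A)
    (bbar : (Unit ⊕ Fin p) → ℝ)
    (hbbar : bbar = Sum.elim (fun _ : Unit => (0 : ℝ))
      (fun j : Fin p => if (j : ℕ) = p - 1 then β else 0))
    (Sigm : ℝ → Matrix (Unit ⊕ Fin p) (Unit ⊕ Fin p) ℝ)
    (hSigm : ∀ t : ℝ, Sigm t = Matrix.of fun i j =>
      ∫ s in (0:ℝ)..t,
        (NormedSpace.exp (s • Abar) *ᵥ bbar) i * (NormedSpace.exp (s • Abar) *ᵥ bbar) j) :
    (∀ t > (0:ℝ), (Sigm t).PosDef ∧ IsUnit (Sigm t)) ∧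
    ∀ R > (0:ℝ), ∀ ε > (0:ℝ), ∃ T : ℝ, ∀ t ≥ T, ∀ x y : (Unit ⊕ Fin p) → ℝ,
      Real.sqrt (∑ i, x i ^ 2) ≤ R → Real.sqrt (∑ i, y i ^ 2) ≤ R →
      |((Sigm t)⁻¹ *ᵥ (NormedSpace.exp (t • Abar) *ᵥ (x - y))) ⬝ᵥ
          (NormedSpace.exp (t • Abar) *ᵥ (x - y))| < ε := by
  classical
  have hcard : Fintype.card (Unit ⊕ Fin p) = p + 1 := by simp [add_comm]
  -- the characteristic polynomial
  set χ : Polynomial ℝ := ∏ k : Fin p, (Polynomial.X + Polynomial.C (lam k)) with hχ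
  have hχmonic : χ.Monic := monic_prod_of_monic _ _ fun k _ => monic_X_add_C _
  have hχdeg : χ.natDegree = p := by
    rw [hχ, Polynomial.natDegree_prod _ _ (fun k _ => (monic_X_add_C (lam k)).ne_zero)]
    simp [Polynomial.natDegree_X_add_C]
  -- eigenvalues and exponents
  set ν : Unit ⊕ Fin p → ℝ := Sum.elim (fun _ => 0) (fun k => -(lam k)) with hν
  have hν_inj : Function.Injective ν := by
    rintro (⟨⟩ | a) (⟨⟩ | b) h
    · rfl
    · exfalso; simp only [hν, Sum.elim_inl, Sum.elim_inr] at h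
      have := hpos b; linarith
    · exfalso; simp only [hν, Sum.elim_inl, Sum.elim_inr] at h
      have := hpos a; linarith
    · simp only [hν, Sum.elim_inr, neg_inj] at h
      exact congrArg Sum.inr (hinj h)
  have hν_nonpos : ∀ j, ν j ≤ 0 := by
    rintro (⟨⟩ | a)
    · simp [hν]
    · simp only [hν, Sum.elim_inr]; linarith [hpos a]
  set idx : Unit ⊕ Fin p → ℕ := Sum.elim (fun _ => 0) (fun i => (i : ℕ) + 1) with hidx
  have hidx_inj : Function.Injective idx := by
    rintro (⟨⟩ | a) (⟨⟩ | b) h <;>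
      simp only [hidx, Sum.elim_inl, Sum.elim_inr] at h
    · rfl
    · omega
    · omega
    · exact congrArg Sum.inr (Fin.ext (by omega))
  have hidx_le : ∀ i, idx i ≤ p := by
    rintro (⟨⟩ | a)
    · simp [hidx]
    · simp only [hidx, Sum.elim_inr]; omega
  set uvec : (Unit ⊕ Fin p) → (Unit ⊕ Fin p) → ℝ := fun j i => ν j ^ idx i with huvec
  -- summation helper
  have hsum_ind : ∀ (m : ℕ) (hm : m < p) (g : Fin p → ℝ),
      (∑ k : Fin p, (if (k : ℕ) = m then (1:ℝ) else 0) * g k) = g ⟨m, hm⟩ := by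
    intro m hm g
    rw [Finset.sum_eq_single (⟨m, hm⟩ : Fin p)]
    · simp
    · intro k _ hk
      have : (k : ℕ) ≠ m := fun h => hk (Fin.ext h)
      simp [this]
    · simp
  -- χ eval facts
  have hχsum : ∀ x : ℝ, (∑ k : Fin p, χ.coeff (k : ℕ) * x ^ ((k : ℕ) + 1))
      = x * (χ.eval x - x ^ p) := by
    intro x
    have he : χ.eval x = ∑ k ∈ Finset.range (p + 1), χ.coeff k * x ^ k :=
      Polynomial.eval_eq_sum_range' (by omega : χ.natDegree < p + 1) x
    have hcp : χ.coeff p = 1 := by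
      have := hχmonic.coeff_natDegree
      rwa [hχdeg] at this
    rw [Finset.sum_range_succ, hcp, one_mul] at he
    have h2 : (∑ k : Fin p, χ.coeff (k : ℕ) * x ^ ((k : ℕ) + 1))
        = ∑ k ∈ Finset.range p, χ.coeff k * x ^ (k + 1) := by
      rw [← Fin.sum_univ_eq_sum_range]
    rw [h2]
    have h3 : ∀ k, χ.coeff k * x ^ (k + 1) = x * (χ.coeff k * x ^ k) := by
      intro k; rw [pow_succ]; ring
    rw [Finset.sum_congr rfl fun k _ => h3 k, ← Finset.mul_sum]
    have h4 : (∑ k ∈ Finset.range p, χ.coeff k * x ^ k) = χ.eval x - x ^ p := by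
      linarith [he]
    rw [h4]
  have hroot : ∀ j, ν j * χ.eval (ν j) = 0 := by
    rintro (⟨⟩ | a)
    · simp [hν]
    · simp only [hν, Sum.elim_inr]
      have : χ.eval (-(lam a)) = 0 := by
        rw [hχ, Polynomial.eval_prod]
        exact Finset.prod_eq_zero (Finset.mem_univ a) (by simp)
      simp [this]
  -- the eigenvector property
  have hEIG : ∀ j, Abar *ᵥ uvec j = ν j • uvec j := by
    intro j
    funext i
    rw [Matrix.mulVec, dotProduct, Fintype.sum_sum_type]
    cases i with
    | inl _ =>
      have h1 : ∀ a : Unit, Abar (Sum.inl ()) (Sum.inl a) = 0 := by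
        intro a; rw [hAbar]; rfl
      have h2 : ∀ k : Fin p, Abar (Sum.inl ()) (Sum.inr k)
          = if (k : ℕ) = 0 then (1:ℝ) else 0 := by
        intro k; rw [hAbar]; rfl
      simp only [h1, h2, zero_mul, Finset.sum_const_zero, zero_add]
      rw [hsum_ind 0 (by omega) (fun k : Fin p => uvec j (Sum.inr k))]
      show ν j ^ ((0:ℕ)+1) = ν j * ν j ^ (0:ℕ)
      rw [pow_one, pow_zero, mul_one]
    | inr i =>
      have h1 : ∀ a : Unit, Abar (Sum.inr i) (Sum.inl a) = 0 := by
        intro a; rw [hAbar]; rfl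
      have h2 : ∀ k : Fin p, Abar (Sum.inr i) (Sum.inr k) = A i k := by
        intro k; rw [hAbar]; rfl
      simp only [h1, h2, zero_mul, Finset.sum_const_zero, zero_add]
      have hrhs : (ν j • uvec j) (Sum.inr i) = ν j * ν j ^ ((i:ℕ)+1) := by
        simp [huvec, hidx, Pi.smul_apply, smul_eq_mul]
      rw [hrhs]
      by_cases hi : (i : ℕ) = p - 1
      · have hip : (i : ℕ) + 1 = p := by omega
        have hterm : ∀ k : Fin p, A i k * (uvec j (Sum.inr k))
            = -(χ.coeff (k:ℕ)) * ν j ^ ((k:ℕ)+1) := by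
          intro k
          rw [hA i k, if_neg (by omega : ¬ (k:ℕ) = (i:ℕ)+1), if_pos hi]
          simp [huvec, hidx]
        rw [Finset.sum_congr rfl fun k _ => hterm k]
        have : (∑ k : Fin p, -(χ.coeff (k:ℕ)) * ν j ^ ((k:ℕ)+1))
            = -(∑ k : Fin p, χ.coeff (k:ℕ) * ν j ^ ((k:ℕ)+1)) := by
          rw [← Finset.sum_neg_distrib]
          exact Finset.sum_congr rfl fun k _ => by ring
        rw [this, hχsum (ν j)]
        have hr := hroot j
        have : ν j * (χ.eval (ν j) - ν j ^ p) = -(ν j * ν j ^ p) := by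
          rw [mul_sub, hr]; ring
        rw [this, neg_neg, hip]
      · have hterm : ∀ k : Fin p, A i k * (uvec j (Sum.inr k))
            = (if (k:ℕ) = (i:ℕ)+1 then (1:ℝ) else 0) * ν j ^ ((k:ℕ)+1) := by
          intro k
          rw [hA i k]
          by_cases hk : (k:ℕ) = (i:ℕ)+1
          · rw [if_pos hk, if_pos hk]; simp [huvec, hidx]
          · rw [if_neg hk, if_neg hi, if_neg hk, zero_mul, zero_mul]
        rw [Finset.sum_congr rfl fun k _ => hterm k]
        have him : (i:ℕ) + 1 < p := by omega
        rw [hsum_ind ((i:ℕ)+1) him (fun k : Fin p => ν j ^ ((k:ℕ)+1))]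
        rw [← pow_succ']
  -- the Vandermonde matrix and expansion coefficients
  set em : (Unit ⊕ Fin p) ≃ Fin (p + 1) :=
    { toFun := Sum.elim (fun _ => (0 : Fin (p+1))) Fin.succ
      invFun := fun k => Fin.cases (Sum.inl ()) Sum.inr k
      left_inv := by rintro (⟨⟩ | a) <;> simp
      right_inv := by
        intro k
        induction k using Fin.cases <;> simp } with hem
  have hem_val : ∀ i, ((em i : Fin (p+1)) : ℕ) = idx i := by
    rintro (⟨⟩ | a) <;> simp [hem, hidx]
  set V : Matrix (Unit ⊕ Fin p) (Unit ⊕ Fin p) ℝ :=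
    Matrix.of (fun i j => ν j ^ idx i) with hV
  have hVdet : V.det ≠ 0 := by
    have hVeq : V = ((Matrix.vandermonde (ν ∘ em.symm)).transpose).submatrix em em := by
      ext i j
      simp [hV, Matrix.vandermonde, hem_val]
    rw [hVeq, Matrix.det_submatrix_equiv_self, Matrix.det_transpose, Matrix.det_vandermonde]
    rw [Finset.prod_ne_zero_iff]
    intro i _
    rw [Finset.prod_ne_zero_iff]
    intro j hj
    have hij : i ≠ j := ne_of_lt (Finset.mem_Ioi.mp hj)
    refine sub_ne_zero.mpr fun he => hij ?_
    have := hν_inj.comp em.symm.injective (he.symm)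
    exact this
  have hVunit : IsUnit V.det := hVdet.isUnit
  set cc : (Unit ⊕ Fin p) → ℝ := V⁻¹ *ᵥ bbar with hcc
  have hbc : ∀ i, bbar i = ∑ j, cc j * ν j ^ idx i := by
    have hVc : V *ᵥ cc = bbar := by
      rw [hcc, Matrix.mulVec_mulVec, Matrix.mul_nonsing_inv _ hVunit, Matrix.one_mulVec]
    intro i
    conv_lhs => rw [← hVc]
    simp [Matrix.mulVec, dotProduct, hV, mul_comm]
  have hcrel : ∀ k, k < p + 1 → (∑ j, cc j * ν j ^ k) = if k = p then β else 0 := by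
    intro k hk
    cases k with
    | zero =>
      have h0 := (hbc (Sum.inl ())).symm
      have : idx (Sum.inl ()) = 0 := rfl
      rw [this] at h0
      have hb0 : bbar (Sum.inl ()) = 0 := by rw [hbbar]; rfl
      rw [hb0] at h0
      rw [h0, if_neg (by omega : ¬ (0:ℕ) = p)]
    | succ m =>
      have hm : m < p := by omega
      have h0 := (hbc (Sum.inr ⟨m, hm⟩)).symm
      have : idx (Sum.inr (⟨m, hm⟩ : Fin p)) = m + 1 := rfl
      rw [this] at h0
      have hb0 : bbar (Sum.inr (⟨m, hm⟩ : Fin p)) = if m = p - 1 then β else 0 := by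
        rw [hbbar]; rfl
      rw [hb0] at h0
      rw [h0]
      exact if_congr (by omega) rfl rfl
  have hc0 : ∀ j, cc j ≠ 0 := by
    apply aux_poly_ne hν_inj hβ
    intro k hk
    rw [hcard] at hk
    have := hcrel k hk
    rw [this]
    exact if_congr (by omega) rfl rfl
  -- the expansion of the exponential applied to bbar
  set Fv : ℝ → (Unit ⊕ Fin p) → ℝ :=
    fun s i => ∑ j, cc j * Real.exp (s * ν j) * ν j ^ idx i with hFv
  have hFvdef : ∀ s i, Fv s i = ∑ j, cc j * Real.exp (s * ν j) * ν j ^ idx i :=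
    fun _ _ => rfl
  have hf : ∀ (s : ℝ) (i), (NormedSpace.exp (s • Abar) *ᵥ bbar) i = Fv s i := by
    intro s
    have hb2 : bbar = ∑ j, cc j • uvec j := by
      funext i
      rw [hbc i]
      simp [Finset.sum_apply, huvec]
    have hexpu : ∀ j, NormedSpace.exp (s • Abar) *ᵥ uvec j
        = Real.exp (s * ν j) • uvec j := by
      intro j
      apply aux_exp_eig
      rw [Matrix.smul_mulVec, hEIG j, smul_smul]
    have : NormedSpace.exp (s • Abar) *ᵥ bbar
        = ∑ j, cc j • (Real.exp (s * ν j) • uvec j) := by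
      rw [hb2, ← Matrix.mulVecLin_apply, map_sum]
      refine Finset.sum_congr rfl fun j _ => ?_
      rw [LinearMap.map_smul, Matrix.mulVecLin_apply, hexpu j]
    intro i
    rw [this]
    simp [Finset.sum_apply, huvec, hFv, smul_smul, mul_assoc]
  have hFv_cont : ∀ i, Continuous fun s => Fv s i := by
    intro i
    apply continuous_finset_sum
    intro j _
    exact (continuous_const.mul
      (Real.continuous_exp.comp (continuous_id.mul continuous_const))).mul continuous_const
  -- the quadratic form function
  set dcoef : ((Unit ⊕ Fin p) → ℝ) → (Unit ⊕ Fin p) → ℝ :=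
    fun v j => cc j * ∑ i, ν j ^ idx i * v i with hdcoef
  set Hfun : ((Unit ⊕ Fin p) → ℝ) → ℝ → ℝ :=
    fun v s => ∑ j, dcoef v j * Real.exp (s * ν j) with hHfun
  have hHdef : ∀ v s, Hfun v s = ∑ j, dcoef v j * Real.exp (s * ν j) := fun _ _ => rfl
  have hddef : ∀ v j, dcoef v j = cc j * ∑ i, ν j ^ idx i * v i := fun _ _ => rfl
  have hHcont : ∀ v, Continuous (Hfun v) := by
    intro v
    apply continuous_finset_sum
    intro j _
    exact continuous_const.mul (Real.continuous_exp.comp (continuous_id.mul continuous_const))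
  have hsumF : ∀ (v : (Unit ⊕ Fin p) → ℝ) (s : ℝ), (∑ i, v i * Fv s i) = Hfun v s := by
    intro v s
    calc (∑ i, v i * Fv s i)
        = ∑ i, ∑ j, v i * (cc j * Real.exp (s * ν j) * ν j ^ idx i) := by
          refine Finset.sum_congr rfl fun i _ => ?_
          rw [hFvdef, Finset.mul_sum]
      _ = ∑ j, ∑ i, v i * (cc j * Real.exp (s * ν j) * ν j ^ idx i) := Finset.sum_comm
      _ = ∑ j, dcoef v j * Real.exp (s * ν j) := by
          refine Finset.sum_congr rfl fun j _ => ?_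
          rw [hddef, Finset.mul_sum, Finset.sum_mul]
          refine Finset.sum_congr rfl fun i _ => ?_
          ring
      _ = Hfun v s := rfl
  have hdot : ∀ (M : Matrix (Unit ⊕ Fin p) (Unit ⊕ Fin p) ℝ) (v : (Unit ⊕ Fin p) → ℝ),
      v ⬝ᵥ (M *ᵥ v) = ∑ i, v i * ∑ k, M i k * v k := fun M v => rfl
  -- generic quadratic form computation
  have hquad : ∀ (e : ℝ → ℝ), Continuous e → ∀ (t : ℝ) (v : (Unit ⊕ Fin p) → ℝ),
      v ⬝ᵥ ((Matrix.of fun i j => ∫ s in (0:ℝ)..t,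
        (NormedSpace.exp (e s • Abar) *ᵥ bbar) i * (NormedSpace.exp (e s • Abar) *ᵥ bbar) j
          : Matrix (Unit ⊕ Fin p) (Unit ⊕ Fin p) ℝ) *ᵥ v)
        = ∫ s in (0:ℝ)..t, (Hfun v (e s))^2 := by
    intro e he t v
    have hcF : ∀ i, Continuous fun s => Fv (e s) i := fun i => (hFv_cont i).comp he
    have hint : ∀ i k, IntervalIntegrable
        (fun s => v i * Fv (e s) i * (v k * Fv (e s) k)) volume 0 t := by
      intro i k
      exact ((continuous_const.mul (hcF i)).mul
        (continuous_const.mul (hcF k))).intervalIntegrable 0 t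
    calc v ⬝ᵥ ((Matrix.of fun i j => ∫ s in (0:ℝ)..t,
        (NormedSpace.exp (e s • Abar) *ᵥ bbar) i * (NormedSpace.exp (e s • Abar) *ᵥ bbar) j
          : Matrix (Unit ⊕ Fin p) (Unit ⊕ Fin p) ℝ) *ᵥ v)
        = ∑ i, ∑ k, (∫ s in (0:ℝ)..t, v i * Fv (e s) i * (v k * Fv (e s) k)) := by
          rw [hdot]
          refine Finset.sum_congr rfl fun i _ => ?_
          rw [Finset.mul_sum]
          refine Finset.sum_congr rfl fun k _ => ?_
          rw [Matrix.of_apply]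
          simp only [hf]
          rw [← intervalIntegral.integral_mul_const, ← intervalIntegral.integral_const_mul]
          refine intervalIntegral.integral_congr fun s _ => ?_
          ring
      _ = ∑ i, ∫ s in (0:ℝ)..t, ∑ k, v i * Fv (e s) i * (v k * Fv (e s) k) := by
          refine Finset.sum_congr rfl fun i _ => ?_
          rw [← intervalIntegral.integral_finset_sum (fun k _ => hint i k)]
      _ = ∫ s in (0:ℝ)..t, ∑ i, ∑ k, v i * Fv (e s) i * (v k * Fv (e s) k) := by
          rw [← intervalIntegral.integral_finset_sum (fun i (_ : i ∈ Finset.univ) =>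
            ((continuous_finset_sum _ (fun k (_ : k ∈ Finset.univ) =>
              ((continuous_const.mul (hcF i)).mul
                (continuous_const.mul (hcF k)))) :
                Continuous fun s => ∑ k, v i * Fv (e s) i * (v k * Fv (e s) k)).intervalIntegrable 0 t))]
      _ = ∫ s in (0:ℝ)..t, (Hfun v (e s))^2 := by
          refine intervalIntegral.integral_congr fun s _ => ?_
          rw [← Finset.sum_mul_sum]
          rw [hsumF v (e s), sq]
  -- the two quadratic form formulas
  set Nmat : ℝ → Matrix (Unit ⊕ Fin p) (Unit ⊕ Fin p) ℝ := fun t => Matrix.of fun i j =>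
    ∫ s in (0:ℝ)..t,
      (NormedSpace.exp ((-s) • Abar) *ᵥ bbar) i * (NormedSpace.exp ((-s) • Abar) *ᵥ bbar) j
    with hNmat
  have hquadS : ∀ (t : ℝ) (v : (Unit ⊕ Fin p) → ℝ),
      v ⬝ᵥ (Sigm t *ᵥ v) = ∫ s in (0:ℝ)..t, (Hfun v s)^2 := by
    intro t v
    rw [hSigm t]
    exact hquad (fun s => s) continuous_id t v
  have hquadN : ∀ (t : ℝ) (v : (Unit ⊕ Fin p) → ℝ),
      v ⬝ᵥ (Nmat t *ᵥ v) = ∫ s in (0:ℝ)..t, (Hfun v (-s))^2 := by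
    intro t v
    rw [hNmat]
    exact hquad (fun s => -s) continuous_neg t v
  -- vanishing coefficients imply zero vector
  have hdzero : ∀ v : (Unit ⊕ Fin p) → ℝ, (∀ j, dcoef v j = 0) → v = 0 := by
    intro v hv
    have hsum0 : ∀ j, (∑ i, ν j ^ idx i * v i) = 0 := by
      intro j
      rcases mul_eq_zero.mp (hv j) with h | h
      · exact absurd h (hc0 j)
      · exact h
    set Q : Polynomial ℝ := ∑ i : Unit ⊕ Fin p, Polynomial.C (v i) * Polynomial.X ^ idx i
      with hQ
    have hQeval : ∀ j, Q.eval (ν j) = 0 := by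
      intro j
      rw [hQ, Polynomial.eval_finset_sum]
      rw [← hsum0 j]
      refine Finset.sum_congr rfl fun i _ => ?_
      simp [mul_comm]
    have hQdeg : Q.natDegree < Fintype.card (Unit ⊕ Fin p) := by
      rw [hcard]
      have : Q.natDegree ≤ p := by
        rw [hQ]
        apply Polynomial.natDegree_sum_le_of_forall_le
        intro i _
        exact le_trans (Polynomial.natDegree_C_mul_X_pow_le _ _) (hidx_le i)
      omega
    have hQ0 : Q = 0 :=
      Polynomial.eq_zero_of_natDegree_lt_card_of_eval_eq_zero Q hν_inj hQeval hQdeg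
    funext i
    have hco : Q.coeff (idx i) = v i := by
      rw [hQ, Polynomial.finset_sum_coeff]
      rw [Finset.sum_eq_single i]
      · simp [Polynomial.coeff_C_mul, Polynomial.coeff_X_pow]
      · intro i' _ hne
        rw [Polynomial.coeff_C_mul, Polynomial.coeff_X_pow,
          if_neg (fun h => hne (hidx_inj h.symm)), mul_zero]
      · simp
    rw [hQ0] at hco
    simp only [Polynomial.coeff_zero] at hco
    exact (hco.symm : v i = 0)
  -- vanishing of Hfun on sample points implies zero
  have hvanish : ∀ (v : (Unit ⊕ Fin p) → ℝ) (δ : ℝ), δ ≠ 0 →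
      (∀ k : ℕ, k < p + 1 → Hfun v ((k : ℝ) * δ) = 0) → v = 0 := by
    intro v δ hδ hvan
    apply hdzero
    apply aux_poly_zero (z := fun j => Real.exp (δ * ν j))
    · intro a b hab
      have := Real.exp_injective hab
      exact hν_inj (mul_left_cancel₀ hδ this)
    · intro k hk
      rw [hcard] at hk
      have h0 := hvan k hk
      rw [hHdef] at h0
      rw [← h0]
      refine Finset.sum_congr rfl fun j _ => ?_
      rw [← Real.exp_nat_mul, ← mul_assoc]
  -- positive definiteness
  have hPDgen : ∀ (B : Matrix (Unit ⊕ Fin p) (Unit ⊕ Fin p) ℝ) (t : ℝ), 0 < t →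
      (∀ i j, B i j = B j i) →
      (∀ v, v ⬝ᵥ (B *ᵥ v) = ∫ s in (0:ℝ)..t, (Hfun v (-s))^2 ∨
        v ⬝ᵥ (B *ᵥ v) = ∫ s in (0:ℝ)..t, (Hfun v s)^2) → B.PosDef := by
    intro B t ht hsymm hrep
    refine Matrix.PosDef.of_dotProduct_mulVec_pos ?_ ?_
    · apply Matrix.ext
      intro i j
      rw [Matrix.conjTranspose_apply, hsymm j i]
      exact star_trivial _
    · intro v hv
      rw [star_trivial]
      have hδpos : (0:ℝ) < t / (p + 1) := by positivity
      have hsample : ∀ (σ : ℝ), |σ| = 1 → ∃ s₀ ∈ Set.Icc (0:ℝ) t, Hfun v (σ * s₀) ≠ 0 := by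
        intro σ hσ
        by_contra hcon
        push_neg at hcon
        apply hv
        apply hvanish v (σ * (t / (p+1))) (by
          intro h
          rcases mul_eq_zero.mp h with h | h
          · rw [h] at hσ; norm_num at hσ
          · exact absurd h (ne_of_gt hδpos))
        intro k hk
        have hmem : (k : ℝ) * (t / (p+1)) ∈ Set.Icc (0:ℝ) t := by
          constructor
          · positivity
          · have hkp : (k : ℝ) ≤ p := by exact_mod_cast (by omega : k ≤ p)
            have h1 : (k:ℝ) * (t / (p+1)) ≤ (p:ℝ) * (t / (p+1)) :=
              mul_le_mul_of_nonneg_right hkp hδpos.le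
            have h2 : (p:ℝ) * (t / (p+1)) ≤ t := by
              rw [mul_div_assoc']
              rw [div_le_iff₀ (by positivity)]
              nlinarith [ht.le]
            linarith
        have := hcon _ hmem
        rw [show (k:ℝ) * (σ * (t/(p+1))) = σ * ((k:ℝ) * (t/(p+1))) by ring]
        exact this
      rcases hrep v with hrepv | hrepv
      · rw [hrepv]
        obtain ⟨s₀, hs₀, hne⟩ := hsample (-1) (by norm_num)
        have hne' : Hfun v (-s₀) ≠ 0 := by
          rw [show -s₀ = -1 * s₀ by ring]; exact hne
        exact aux_integral_sq_pos ((hHcont v).comp continuous_neg) ht hs₀ hne'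
      · rw [hrepv]
        obtain ⟨s₀, hs₀, hne⟩ := hsample 1 (by norm_num)
        have hne' : Hfun v s₀ ≠ 0 := by
          rw [show (1:ℝ) * s₀ = s₀ by ring] at hne
          exact hne
        exact aux_integral_sq_pos (hHcont v) ht hs₀ hne'
  have hPD : ∀ t : ℝ, 0 < t → (Sigm t).PosDef := by
    intro t ht
    apply hPDgen (Sigm t) t ht
    · intro i j
      rw [hSigm]
      simp only [Matrix.of_apply]
      refine intervalIntegral.integral_congr fun s _ => ?_
      ring
    · intro v
      right
      exact hquadS t v
  have hPDN : ∀ t : ℝ, 0 < t → (Nmat t).PosDef := by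
    intro t ht
    apply hPDgen (Nmat t) t ht
    · intro i j
      rw [hNmat]
      simp only [Matrix.of_apply]
      refine intervalIntegral.integral_congr fun s _ => ?_
      ring
    · intro v
      left
      exact hquadN t v
  refine ⟨fun t ht => ⟨hPD t ht, (hPD t ht).isUnit⟩, ?_⟩
  -- Part (ii)
  -- factorization Sigm t = Et * Nmat t * Etᵀ
  have hfact : ∀ t : ℝ, Sigm t
      = NormedSpace.exp (t • Abar) * Nmat t * (NormedSpace.exp (t • Abar))ᵀ := by
    intro t
    set Et := NormedSpace.exp (t • Abar) with hEt
    have hmulexp : ∀ s : ℝ, ∀ i, (Et *ᵥ (fun k => Fv (-s) k)) i = Fv (t - s) i := by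
      intro s i
      have h1 : (fun k => Fv (-s) k) = NormedSpace.exp ((-s) • Abar) *ᵥ bbar := by
        funext k; rw [hf (-s) k]
      rw [h1, Matrix.mulVec_mulVec]
      have h2 : Et * NormedSpace.exp ((-s) • Abar) = NormedSpace.exp ((t - s) • Abar) := by
        rw [hEt, ← Matrix.exp_add_of_commute _ _
          (((Commute.refl Abar).smul_left t).smul_right (-s))]
        rw [sub_eq_add_neg, add_smul]
      rw [h2, hf (t - s) i]
    apply Matrix.ext
    intro i j
    have hNentry : ∀ k l, Nmat t k l = ∫ s in (0:ℝ)..t, Fv (-s) k * Fv (-s) l := by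
      intro k l
      rw [hNmat]
      simp only [Matrix.of_apply]
      refine intervalIntegral.integral_congr fun s _ => ?_
      rw [hf, hf]
    have hcFk : ∀ k, Continuous fun s => Fv (-s) k :=
      fun k => (hFv_cont k).comp continuous_neg
    have hintkl : ∀ (a b : ℝ) (k l), IntervalIntegrable
        (fun s => Et i k * Fv (-s) k * (Et j l * Fv (-s) l)) volume a b := by
      intro a b k l
      exact ((continuous_const.mul (hcFk k)).mul
        (continuous_const.mul (hcFk l))).intervalIntegrable a b
    calc Sigm t i j = ∫ s in (0:ℝ)..t, Fv s i * Fv s j := by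
          rw [hSigm]
          simp only [Matrix.of_apply]
          refine intervalIntegral.integral_congr fun s _ => ?_
          rw [hf, hf]
      _ = ∫ s in (0:ℝ)..t, Fv (t - s) i * Fv (t - s) j := by
          rw [intervalIntegral.integral_comp_sub_left (fun s => Fv s i * Fv s j) t]
          rw [sub_self, sub_zero]
      _ = ∫ s in (0:ℝ)..t, (∑ k, Et i k * Fv (-s) k) * (∑ l, Et j l * Fv (-s) l) := by
          refine intervalIntegral.integral_congr fun s _ => ?_
          rw [← hmulexp s i, ← hmulexp s j]
          rfl
      _ = ∫ s in (0:ℝ)..t, ∑ k, ∑ l, Et i k * Fv (-s) k * (Et j l * Fv (-s) l) := by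
          refine intervalIntegral.integral_congr fun s _ => ?_
          rw [Finset.sum_mul_sum]
      _ = ∑ k, ∑ l, ∫ s in (0:ℝ)..t, Et i k * Fv (-s) k * (Et j l * Fv (-s) l) := by
          rw [intervalIntegral.integral_finset_sum (fun k (_ : k ∈ Finset.univ) =>
            ((continuous_finset_sum _ (fun l (_ : l ∈ Finset.univ) =>
              ((continuous_const.mul (hcFk k)).mul
                (continuous_const.mul (hcFk l)))) :
                Continuous fun s => ∑ l, Et i k * Fv (-s) k * (Et j l * Fv (-s) l)).intervalIntegrable 0 t))]
          refine Finset.sum_congr rfl fun k _ => ?_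
          rw [intervalIntegral.integral_finset_sum (fun l (_ : l ∈ Finset.univ) =>
            hintkl 0 t k l)]
      _ = ∑ k, ∑ l, Et i k * (Nmat t k l * Et j l) := by
          refine Finset.sum_congr rfl fun k _ => ?_
          refine Finset.sum_congr rfl fun l _ => ?_
          rw [hNentry k l]
          rw [← intervalIntegral.integral_mul_const, ← intervalIntegral.integral_const_mul]
          refine intervalIntegral.integral_congr fun s _ => ?_
          ring
      _ = (Et * Nmat t * Etᵀ) i j := by
          have hexp2 : (Et * Nmat t * Etᵀ) i j = ∑ l, ∑ k, Et i k * Nmat t k l * Et j l := by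
            rw [Matrix.mul_apply]
            refine Finset.sum_congr rfl fun l _ => ?_
            rw [Matrix.mul_apply, Matrix.transpose_apply, Finset.sum_mul]
          rw [hexp2, Finset.sum_comm]
          refine Finset.sum_congr rfl fun k _ => Finset.sum_congr rfl fun l _ => by ring
  -- algebraic identity for the quadratic form of the inverse
  have halg : ∀ t : ℝ, 0 < t → ∀ w : (Unit ⊕ Fin p) → ℝ,
      ((Sigm t)⁻¹ *ᵥ (NormedSpace.exp (t • Abar) *ᵥ w)) ⬝ᵥ (NormedSpace.exp (t • Abar) *ᵥ w)
        = ((Nmat t)⁻¹ *ᵥ w) ⬝ᵥ w := by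
    intro t ht w
    set Et := NormedSpace.exp (t • Abar) with hEt
    have hEtunit : IsUnit Et := by
      rw [hEt]; exact Matrix.isUnit_exp (t • Abar)
    have hEdet : IsUnit Et.det := (Matrix.isUnit_iff_isUnit_det _).mp hEtunit
    have hNdet : IsUnit (Nmat t).det := (Matrix.isUnit_iff_isUnit_det _).mp (hPDN t ht).isUnit
    rw [hfact t, ← hEt]
    rw [Matrix.mul_inv_rev, Matrix.mul_inv_rev]
    rw [Matrix.mulVec_mulVec]
    have hX : Etᵀ⁻¹ * ((Nmat t)⁻¹ * Et⁻¹) * Et = Etᵀ⁻¹ * (Nmat t)⁻¹ := by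
      rw [mul_assoc, mul_assoc, Matrix.nonsing_inv_mul _ hEdet, mul_one]
    rw [hX, ← Matrix.mulVec_mulVec, dotProduct_comm, Matrix.dotProduct_mulVec]
    have hvm : (Et *ᵥ w) ᵥ* Etᵀ⁻¹ = w := by
      rw [← Matrix.transpose_nonsing_inv, Matrix.vecMul_transpose,
        Matrix.mulVec_mulVec, Matrix.nonsing_inv_mul _ hEdet, Matrix.one_mulVec]
    rw [hvm, dotProduct_comm]
  -- monotonicity of the quadratic form of Nmat in t
  have hmono : ∀ (v : (Unit ⊕ Fin p) → ℝ) (t₁ t₂ : ℝ), 0 ≤ t₁ → t₁ ≤ t₂ →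
      v ⬝ᵥ (Nmat t₁ *ᵥ v) ≤ v ⬝ᵥ (Nmat t₂ *ᵥ v) := by
    intro v t₁ t₂ h0 h12
    rw [hquadN, hquadN]
    have hi : ∀ a b : ℝ, IntervalIntegrable (fun s => (Hfun v (-s))^2) volume a b :=
      fun a b => (((hHcont v).comp continuous_neg).pow 2).intervalIntegrable a b
    rw [← intervalIntegral.integral_add_adjacent_intervals (hi 0 t₁) (hi t₁ t₂)]
    have hnn : 0 ≤ ∫ s in t₁..t₂, (Hfun v (-s))^2 :=
      intervalIntegral.integral_nonneg h12 (fun u _ => sq_nonneg _)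
    linarith
  -- divergence of the quadratic form of Nmat for each fixed nonzero vector
  have hgrow : ∀ v : (Unit ⊕ Fin p) → ℝ, v ≠ 0 → ∀ M : ℝ,
      ∃ T : ℝ, ∀ t ≥ T, M ≤ v ⬝ᵥ (Nmat t *ᵥ v) := by
    intro v hv M
    have hJne : ∃ j, dcoef v j ≠ 0 := by
      by_contra hcon
      push_neg at hcon
      exact hv (hdzero v hcon)
    set J : Finset (Unit ⊕ Fin p) := Finset.univ.filter (fun j => dcoef v j ≠ 0) with hJ
    have hJne' : J.Nonempty := by
      obtain ⟨j, hj⟩ := hJne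
      exact ⟨j, by simp [hJ, hj]⟩
    obtain ⟨js, hjsJ, hjsmax⟩ := Finset.exists_max_image J (fun j => -ν j) hJne'
    have hds : dcoef v js ≠ 0 := (Finset.mem_filter.mp hjsJ).2
    set κ : ℝ := -ν js with hκ
    have hκ0 : 0 ≤ κ := by rw [hκ]; linarith [hν_nonpos js]
    have htend : Filter.Tendsto (fun s => Hfun v (-s) * Real.exp (-(κ * s)))
        Filter.atTop (nhds (dcoef v js)) := by
      have hre : ∀ s : ℝ, Hfun v (-s) * Real.exp (-(κ * s))
          = ∑ j, dcoef v j * Real.exp ((-ν j - κ) * s) := by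
        intro s
        rw [hHdef, Finset.sum_mul]
        refine Finset.sum_congr rfl fun j _ => ?_
        rw [mul_assoc, ← Real.exp_add]
        congr 2
        ring
      simp only [hre]
      have hlim : (dcoef v js) = ∑ j, (if j = js then dcoef v js else 0) := by
        rw [Finset.sum_ite_eq' Finset.univ js (fun _ => dcoef v js)]
        simp
      rw [hlim]
      apply tendsto_finset_sum
      intro j _
      by_cases hjjs : j = js
      · subst hjjs
        rw [if_pos rfl]
        have : ∀ s : ℝ, dcoef v j * Real.exp ((-ν j - κ) * s) = dcoef v j := by
          intro s
          rw [hκ, show -ν j - -ν j = (0:ℝ) by ring, zero_mul, Real.exp_zero, mul_one]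
        simp only [this]
        exact tendsto_const_nhds
      · rw [if_neg hjjs]
        by_cases hdj : dcoef v j = 0
        · simp only [hdj, zero_mul]
          exact tendsto_const_nhds
        · have hjJ : j ∈ J := by simp [hJ, hdj]
          have hle : -ν j ≤ κ := hjsmax j hjJ
          have hlt : -ν j - κ < 0 := by
            rcases lt_or_eq_of_le hle with h | h
            · linarith
            · exfalso
              apply hjjs
              apply hν_inj
              rw [hκ] at h
              linarith
          have h1 : Filter.Tendsto (fun s : ℝ => (-ν j - κ) * s) Filter.atTop Filter.atBot :=
            (Filter.tendsto_const_mul_atBot_of_neg hlt).mpr Filter.tendsto_id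
          have h2 := Real.tendsto_exp_atBot.comp h1
          have h3 := h2.const_mul (dcoef v j)
          simpa using h3
    have hev : ∀ᶠ s in Filter.atTop, |dcoef v js| / 2 ≤ |Hfun v (-s)| := by
      have h3 : ∀ᶠ s in Filter.atTop,
          dist (Hfun v (-s) * Real.exp (-(κ * s))) (dcoef v js) < |dcoef v js| / 2 :=
        htend.eventually (Metric.ball_mem_nhds _ (by positivity))
      filter_upwards [h3, Filter.eventually_ge_atTop (0:ℝ)] with s hs hs0
      rw [Real.dist_eq] at hs
      have habs : |dcoef v js| / 2 ≤ |Hfun v (-s) * Real.exp (-(κ * s))| := by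
        have h4 := abs_sub_abs_le_abs_sub (dcoef v js) (Hfun v (-s) * Real.exp (-(κ * s)))
        rw [abs_sub_comm] at h4
        linarith
      have hprod : |Hfun v (-s) * Real.exp (-(κ * s))|
          = |Hfun v (-s)| * Real.exp (-(κ * s)) := by
        rw [abs_mul, abs_of_pos (Real.exp_pos _)]
      rw [hprod] at habs
      have hexp1 : Real.exp (-(κ * s)) ≤ 1 := Real.exp_le_one_iff.mpr (by nlinarith)
      nlinarith [abs_nonneg (Hfun v (-s)), Real.exp_pos (-(κ * s))]
    obtain ⟨S₀', hS₀'⟩ := Filter.eventually_atTop.mp hev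
    set S₀ : ℝ := max S₀' 0 with hS₀def
    set ρ : ℝ := (|dcoef v js| / 2)^2 with hρ
    have hρpos : 0 < ρ := by
      rw [hρ]
      have : |dcoef v js| ≠ 0 := fun h => hds (abs_eq_zero.mp h)
      positivity
    refine ⟨S₀ + (|M| + 1) / ρ, ?_⟩
    intro t ht
    have htS : S₀ ≤ t := by
      have : 0 < (|M| + 1) / ρ := by positivity
      linarith
    rw [hquadN]
    have hi : ∀ a b : ℝ, IntervalIntegrable (fun s => (Hfun v (-s))^2) volume a b :=
      fun a b => (((hHcont v).comp continuous_neg).pow 2).intervalIntegrable a b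
    rw [← intervalIntegral.integral_add_adjacent_intervals (hi 0 S₀) (hi S₀ t)]
    have h1 : 0 ≤ ∫ s in (0:ℝ)..S₀, (Hfun v (-s))^2 :=
      intervalIntegral.integral_nonneg (le_max_right _ _) (fun u _ => sq_nonneg _)
    have h2 : ρ * (t - S₀) ≤ ∫ s in S₀..t, (Hfun v (-s))^2 := by
      have hmono2 := intervalIntegral.integral_mono_on (f := fun _ => ρ)
        (g := fun s => (Hfun v (-s))^2) htS intervalIntegrable_const (hi S₀ t) ?_
      · rw [intervalIntegral.integral_const, smul_eq_mul, mul_comm] at hmono2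
        exact hmono2
      · intro x hx
        have hxS : S₀' ≤ x := le_trans (le_max_left _ _) hx.1
        have hHx := hS₀' x hxS
        show ρ ≤ (Hfun v (-x))^2
        rw [hρ, ← sq_abs (Hfun v (-x))]
        exact pow_le_pow_left₀ (by positivity) hHx 2
    have h3 : |M| + 1 ≤ ρ * (t - S₀) := by
      have ht2 : (|M| + 1) / ρ ≤ t - S₀ := by linarith
      calc |M| + 1 = ρ * ((|M| + 1) / ρ) := by field_simp
        _ ≤ ρ * (t - S₀) := by
            exact mul_le_mul_of_nonneg_left ht2 hρpos.le
    have hM : M ≤ |M| + 1 := by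
      have := le_abs_self M
      linarith
    linarith
  -- uniform lower bound via compactness of the sphere
  have hqcont : ∀ (B : Matrix (Unit ⊕ Fin p) (Unit ⊕ Fin p) ℝ),
      Continuous fun w : (Unit ⊕ Fin p) → ℝ => w ⬝ᵥ (B *ᵥ w) := by
    intro B
    show Continuous fun w : (Unit ⊕ Fin p) → ℝ => ∑ i, w i * ∑ k, B i k * w k
    apply continuous_finset_sum
    intro i _
    exact (continuous_apply i).mul
      (continuous_finset_sum _ fun k _ => continuous_const.mul (continuous_apply k))
  have hlmin : ∀ M : ℝ, 0 < M → ∃ T : ℝ, 1 ≤ T ∧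
      ∀ t ≥ T, ∀ w : (Unit ⊕ Fin p) → ℝ, M * (w ⬝ᵥ w) ≤ w ⬝ᵥ (Nmat t *ᵥ w) := by
    intro M hM
    set S : Set ((Unit ⊕ Fin p) → ℝ) := {w | w ⬝ᵥ w = 1} with hSdef
    have hScomp : IsCompact S := by
      have hclosed : IsClosed S := isClosed_eq (by
        show Continuous fun w : (Unit ⊕ Fin p) → ℝ => ∑ i, w i * w i
        exact continuous_finset_sum _ fun i _ => (continuous_apply i).mul (continuous_apply i))
        continuous_const
      have hbd : Bornology.IsBounded S := by
        apply (Metric.isBounded_closedBall (x := (0 : (Unit ⊕ Fin p) → ℝ)) (r := 1)).subset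
        intro w hw
        rw [Metric.mem_closedBall, dist_zero_right]
        rw [pi_norm_le_iff_of_nonneg zero_le_one]
        intro i
        rw [Real.norm_eq_abs, abs_le_one_iff_mul_self_le_one]
        have hle : w i * w i ≤ ∑ k, w k * w k :=
          Finset.single_le_sum (fun k _ => mul_self_nonneg (w k)) (Finset.mem_univ i)
        have hw1 : (∑ k, w k * w k) = 1 := hw
        linarith
      exact Metric.isCompact_of_isClosed_isBounded hclosed hbd
    have hSne : ∀ w ∈ S, w ≠ 0 := by
      intro w hw h0
      rw [hSdef] at hw
      simp only [Set.mem_setOf_eq, h0] at hw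
      rw [zero_dotProduct] at hw
      exact zero_ne_one hw
    have hcov : ∀ w : S, ∃ T' : ℝ, ∀ t ≥ T', M + 1 ≤ (w : (Unit ⊕ Fin p) → ℝ) ⬝ᵥ (Nmat t *ᵥ w) :=
      fun w => hgrow w (hSne w w.2) (M + 1)
    choose T' hT' using hcov
    set U : S → Set ((Unit ⊕ Fin p) → ℝ) :=
      fun w => {v | M < v ⬝ᵥ (Nmat (max (T' w) 1) *ᵥ v)} with hU
    have hUopen : ∀ w, IsOpen (U w) := fun w => isOpen_lt continuous_const (hqcont _)
    have hcover : S ⊆ ⋃ w, U w := by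
      intro w hw
      rw [Set.mem_iUnion]
      refine ⟨⟨w, hw⟩, ?_⟩
      rw [hU]
      simp only [Set.mem_setOf_eq]
      have := hT' ⟨w, hw⟩ (max (T' ⟨w, hw⟩) 1) (le_max_left _ _)
      linarith
    obtain ⟨fs, hfs⟩ := hScomp.elim_finite_subcover U hUopen hcover
    refine ⟨1 + ∑ w ∈ fs, max (T' w) 1, by
      have : 0 ≤ ∑ w ∈ fs, max (T' w) 1 :=
        Finset.sum_nonneg fun w _ => le_trans zero_le_one (le_max_right _ _)
      linarith, ?_⟩
    intro t ht w
    by_cases hw0 : w = 0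
    · simp [hw0]
    · have hww : 0 < w ⬝ᵥ w := by
        obtain ⟨i, hi⟩ := Function.ne_iff.mp hw0
        apply Finset.sum_pos' (fun i _ => mul_self_nonneg _)
        exact ⟨i, Finset.mem_univ i, mul_self_pos.mpr hi⟩
      set r : ℝ := Real.sqrt (w ⬝ᵥ w) with hr
      have hrpos : 0 < r := Real.sqrt_pos.mpr hww
      set w' : (Unit ⊕ Fin p) → ℝ := r⁻¹ • w with hw'
      have hrr : r * r = w ⬝ᵥ w := Real.mul_self_sqrt hww.le
      have hw'S : w' ∈ S := by
        rw [hSdef]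
        show w' ⬝ᵥ w' = 1
        rw [hw', smul_dotProduct, dotProduct_smul, smul_eq_mul, smul_eq_mul,
          ← hrr]
        field_simp
      have hwmem := hfs hw'S
      rw [Set.mem_iUnion] at hwmem
      simp only [Set.mem_iUnion, exists_prop] at hwmem
      obtain ⟨i0, hi0fs, hi0U⟩ := hwmem
      have h1 : M < w' ⬝ᵥ (Nmat (max (T' i0) 1) *ᵥ w') := hi0U
      have hTle : max (T' i0) 1 ≤ t := by
        have hsle : max (T' i0) 1 ≤ ∑ w ∈ fs, max (T' w) 1 :=
          Finset.single_le_sum (f := fun w => max (T' w) 1)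
            (fun w _ => le_trans zero_le_one (le_max_right _ _)) hi0fs
        linarith
      have h2 : w' ⬝ᵥ (Nmat (max (T' i0) 1) *ᵥ w') ≤ w' ⬝ᵥ (Nmat t *ᵥ w') :=
        hmono w' _ t (le_trans zero_le_one (le_max_right _ _)) hTle
      have hscale : w ⬝ᵥ (Nmat t *ᵥ w) = (w ⬝ᵥ w) * (w' ⬝ᵥ (Nmat t *ᵥ w')) := by
        have hwr : w = r • w' := by
          rw [hw', smul_smul, mul_inv_cancel₀ hrpos.ne', one_smul]
        conv_lhs => rw [hwr]
        rw [smul_dotProduct, Matrix.mulVec_smul, dotProduct_smul,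
          smul_eq_mul, smul_eq_mul, ← mul_assoc, hrr]
      rw [hscale]
      have h3 : M ≤ w' ⬝ᵥ (Nmat t *ᵥ w') := le_of_lt (lt_of_lt_of_le h1 h2)
      nlinarith
  -- conclusion
  intro R hR ε hε
  have hM : 0 < (4 * R^2 + 1) / ε := by positivity
  obtain ⟨T, hT1, hTb⟩ := hlmin ((4 * R^2 + 1) / ε) hM
  refine ⟨T, ?_⟩
  intro t ht x y hx hy
  have ht0 : 0 < t := lt_of_lt_of_le one_pos (le_trans hT1 ht)
  have hNdet : IsUnit (Nmat t).det :=
    (Matrix.isUnit_iff_isUnit_det _).mp (hPDN t ht0).isUnit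
  obtain ⟨hq0, hqle⟩ := aux_inv_quad (Nmat t) hNdet hM (fun w' => hTb t ht w') (x - y)
  rw [halg t ht0 (x - y), abs_of_nonneg hq0]
  have hxx : ∑ i, x i ^ 2 ≤ R^2 := by
    have h0 : (0:ℝ) ≤ ∑ i, x i ^ 2 := Finset.sum_nonneg fun i _ => sq_nonneg _
    nlinarith [Real.sq_sqrt h0, Real.sqrt_nonneg (∑ i, x i ^ 2)]
  have hyy : ∑ i, y i ^ 2 ≤ R^2 := by
    have h0 : (0:ℝ) ≤ ∑ i, y i ^ 2 := Finset.sum_nonneg fun i _ => sq_nonneg _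
    nlinarith [Real.sq_sqrt h0, Real.sqrt_nonneg (∑ i, y i ^ 2)]
  have hww : (x - y) ⬝ᵥ (x - y) ≤ 4 * R^2 := by
    have h1 : (x - y) ⬝ᵥ (x - y) = ∑ i, (x i - y i) * (x i - y i) := rfl
    rw [h1]
    have h2 : ∀ i : Unit ⊕ Fin p, (x i - y i) * (x i - y i) ≤ 2 * x i ^2 + 2 * y i ^2 := by
      intro i; nlinarith [sq_nonneg (x i + y i)]
    calc (∑ i, (x i - y i) * (x i - y i)) ≤ ∑ i, (2 * x i ^2 + 2 * y i ^2) :=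
          Finset.sum_le_sum fun i _ => h2 i
      _ = 2 * (∑ i, x i ^2) + 2 * (∑ i, y i ^2) := by
          rw [Finset.sum_add_distrib, ← Finset.mul_sum, ← Finset.mul_sum]
      _ ≤ 4 * R^2 := by linarith
  have hfin : ((x - y) ⬝ᵥ (x - y)) / ((4 * R^2 + 1) / ε) < ε := by
    rw [div_lt_iff₀ hM]
    have heq : ε * ((4 * R^2 + 1) / ε) = 4 * R^2 + 1 := by field_simp
    rw [heq]
    linarith
  exact lt_of_le_of_lt hqle hfin
end

section
/- Let (Ω, 𝓕, P) be a probability space and let Z : (0, 1] × Ω → [0, ∞) be jointly measurable and such that all the random variables Z_t := Z(t, ·), t ∈ (0, 1], have the same distribution. Let ε ∈ (0, 1) and s > 0 be such that P(Z₁ ≥ s) ≥ 1 − ε². Then P( for infinitely many n ∈ ℕ, ∫₀^{1/n} 1_{{Z_t ≥ s}} dt ≥ (1 − ε)/n ) ≥ 1 − ε; that is, the limsup over n of the events { ∫₀^{1/n} 1_{{Z_t ≥ s}} dt ≥ (1 − ε)/n } has probability at least 1 − ε. -/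
open MeasureTheory

/-- If the random variables `Z_t`, `t ∈ (0,1]`, are nonnegative, jointly measurable and
identically distributed, and `P(Z₁ ≥ s) ≥ 1 − ε²`, then with probability at least `1 − ε`
there are infinitely many `n` with `∫₀^{1/n} 1_{Z_t ≥ s} dt ≥ (1 − ε)/n`. -/
theorem limsup_occupation_lower_bound {Ω : Type*} [MeasurableSpace Ω]
    (P : Measure Ω) [IsProbabilityMeasure P]
    (Z : ℝ → Ω → ℝ)
    (hmeas : Measurable (fun q : Set.Ioc (0:ℝ) 1 × Ω => Z q.1 q.2))
    (hnonneg : ∀ t ∈ Set.Ioc (0:ℝ) 1, ∀ ω, 0 ≤ Z t ω)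
    (hident : ∀ t ∈ Set.Ioc (0:ℝ) 1, P.map (Z t) = P.map (Z 1))
    (ε s : ℝ) (hε : ε ∈ Set.Ioo (0:ℝ) 1) (hs : 0 < s)
    (hZ1 : ENNReal.ofReal (1 - ε ^ 2) ≤ P {ω | s ≤ Z 1 ω}) :
    ENNReal.ofReal (1 - ε) ≤
      P (Filter.atTop.limsup fun n : ℕ =>
        {ω | (1 - ε) / n ≤
          ∫ t in (0:ℝ)..(1 / (n:ℝ)), Set.indicator {u : ℝ | s ≤ Z u ω} (fun _ => (1:ℝ)) t}) := by
  obtain ⟨hε0, hε1⟩ := hε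
  -- the measurable "occupation" set
  have hemb : MeasurableEmbedding (fun q : Set.Ioc (0:ℝ) 1 × Ω => ((q.1 : ℝ), q.2)) :=
    (MeasurableEmbedding.subtype_coe measurableSet_Ioc).prodMap MeasurableEmbedding.id
  set T : Set (ℝ × Ω) :=
    (fun q : Set.Ioc (0:ℝ) 1 × Ω => ((q.1 : ℝ), q.2)) '' {q | s ≤ Z q.1 q.2} with hTdef
  have hTmeas : MeasurableSet T :=
    hemb.measurableSet_image.2 (measurableSet_le measurable_const hmeas)
  have hTmem : ∀ p : ℝ × Ω, p ∈ T ↔ p.1 ∈ Set.Ioc (0:ℝ) 1 ∧ s ≤ Z p.1 p.2 := by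
    rintro ⟨t, ω⟩
    constructor
    · rintro ⟨⟨⟨u, hu⟩, ω'⟩, hq, h⟩
      obtain ⟨rfl, rfl⟩ : u = t ∧ ω' = ω := by simpa using h
      exact ⟨hu, hq⟩
    · rintro ⟨ht, hq⟩
      exact ⟨⟨⟨t, ht⟩, ω⟩, hq, rfl⟩
  set A : ℕ → Set Ω := fun n =>
    {ω | (1 - ε) / n ≤
      ∫ t in (0:ℝ)..(1 / (n:ℝ)), Set.indicator {u : ℝ | s ≤ Z u ω} (fun _ => (1:ℝ)) t} with hAdef
  set S : ℕ → Set (ℝ × Ω) := fun n => T ∩ (Set.Ioc (0:ℝ) (1/(n:ℝ))) ×ˢ Set.univ with hSdef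
  have hSmeas : ∀ n, MeasurableSet (S n) := fun n =>
    hTmeas.inter (measurableSet_Ioc.prod MeasurableSet.univ)
  set occ : ℕ → Ω → ENNReal := fun n ω => volume ((fun t => (t, ω)) ⁻¹' (S n)) with hoccdef
  have hoccmeas : ∀ n, Measurable (occ n) := fun n =>
    measurable_measure_prodMk_right (hSmeas n)
  -- basic facts
  have hA0 : A 0 = Set.univ := by
    apply Set.eq_univ_iff_forall.2
    intro ω
    simp [hAdef]
  -- identify A n with a superlevel set of occ n, for n ≥ 1
  have hslice : ∀ n, ∀ ω, (fun t => (t, ω)) ⁻¹' (S n)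
      = {t : ℝ | (t, ω) ∈ T} ∩ Set.Ioc (0:ℝ) (1/(n:ℝ)) := by
    intro n ω
    ext t
    simp [hSdef, Set.mem_prod]
  have hslice_sub : ∀ n ω, (fun t => (t, ω)) ⁻¹' (S n) ⊆ Set.Ioc (0:ℝ) (1/(n:ℝ)) := by
    intro n ω
    rw [hslice]
    exact Set.inter_subset_right
  have hocc_le : ∀ n ω, occ n ω ≤ ENNReal.ofReal (1/(n:ℝ)) := by
    intro n ω
    calc occ n ω ≤ volume (Set.Ioc (0:ℝ) (1/(n:ℝ))) := measure_mono (hslice_sub n ω)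
      _ = ENNReal.ofReal (1/(n:ℝ)) := by rw [Real.volume_Ioc, sub_zero]
  have hocc_ne_top : ∀ n ω, occ n ω ≠ ⊤ := fun n ω =>
    ((hocc_le n ω).trans_lt ENNReal.ofReal_lt_top).ne
  have hslice_meas : ∀ n ω, MeasurableSet ((fun t => (t, ω)) ⁻¹' (S n)) := by
    intro n ω
    exact (hSmeas n).preimage (measurable_id.prodMk measurable_const)
  have hAeq : ∀ n : ℕ, 1 ≤ n →
      A n = {ω | ENNReal.ofReal ((1 - ε)/(n:ℝ)) ≤ occ n ω} := by
    intro n hn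
    have hn0 : (0:ℝ) < (n:ℝ) := by exact_mod_cast hn
    have h1n : (0:ℝ) < 1/(n:ℝ) := by positivity
    have h1n1 : 1/(n:ℝ) ≤ 1 := by
      rw [div_le_one hn0]; exact_mod_cast hn
    ext ω
    have hint : (∫ t in (0:ℝ)..(1/(n:ℝ)),
        Set.indicator {u : ℝ | s ≤ Z u ω} (fun _ => (1:ℝ)) t) = (occ n ω).toReal := by
      rw [intervalIntegral.integral_of_le h1n.le]
      have hcongr : ∀ t ∈ Set.Ioc (0:ℝ) (1/(n:ℝ)),
          Set.indicator {u : ℝ | s ≤ Z u ω} (fun _ => (1:ℝ)) t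
            = Set.indicator ((fun t => (t, ω)) ⁻¹' (S n)) (fun _ => (1:ℝ)) t := by
        intro t ht
        have htmem : t ∈ (fun t => (t, ω)) ⁻¹' (S n) ↔ s ≤ Z t ω := by
          rw [hslice]
          simp only [Set.mem_inter_iff, Set.mem_setOf_eq, hTmem]
          have ht1 : t ∈ Set.Ioc (0:ℝ) 1 := ⟨ht.1, ht.2.trans h1n1⟩
          tauto
        by_cases h : s ≤ Z t ω <;>
          simp [Set.indicator_apply, htmem, h]
      rw [setIntegral_congr_fun measurableSet_Ioc hcongr,
        integral_indicator_const (1:ℝ) (hslice_meas n ω), smul_eq_mul, mul_one,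
        measureReal_def, Measure.restrict_apply (hslice_meas n ω),
        Set.inter_eq_self_of_subset_left (hslice_sub n ω)]
    simp only [hAdef, Set.mem_setOf_eq, hint]
    exact (ENNReal.ofReal_le_iff_le_toReal (hocc_ne_top n ω)).symm
  -- measurability of A n
  have hAmeas : ∀ n, MeasurableSet (A n) := by
    intro n
    rcases Nat.eq_zero_or_pos n with rfl | hn
    · rw [hA0]; exact MeasurableSet.univ
    · rw [hAeq n hn]
      exact (hoccmeas n) measurableSet_Ici
  -- measure lower bound for A n, n ≥ 1
  have hPA : ∀ n : ℕ, 1 ≤ n → ENNReal.ofReal (1 - ε) ≤ P (A n) := by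
    intro n hn
    have hn0 : (0:ℝ) < (n:ℝ) := by exact_mod_cast hn
    have h1n : (0:ℝ) < 1/(n:ℝ) := by positivity
    have h1n1 : 1/(n:ℝ) ≤ 1 := by rw [div_le_one hn0]; exact_mod_cast hn
    -- mean of occ
    have hmean : ENNReal.ofReal ((1 - ε^2)/(n:ℝ)) ≤ ∫⁻ ω, occ n ω ∂P := by
      have h1 : ∫⁻ ω, occ n ω ∂P = (volume.prod P) (S n) :=
        (Measure.prod_apply_symm (hSmeas n)).symm
      have h2 : (volume.prod P) (S n) = ∫⁻ t, P (Prod.mk t ⁻¹' (S n)) ∂volume :=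
        Measure.prod_apply (hSmeas n)
      have h3 : ∀ t ∈ Set.Ioc (0:ℝ) (1/(n:ℝ)),
          ENNReal.ofReal (1 - ε^2) ≤ P (Prod.mk t ⁻¹' (S n)) := by
        intro t ht
        have ht1 : t ∈ Set.Ioc (0:ℝ) 1 := ⟨ht.1, ht.2.trans h1n1⟩
        have hset : Prod.mk t ⁻¹' (S n) = {ω | s ≤ Z t ω} := by
          ext ω
          simp only [hSdef, Set.mem_preimage, Set.mem_inter_iff, Set.mem_prod, Set.mem_univ,
            and_true, hTmem, Set.mem_setOf_eq]
          tauto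
        rw [hset]
        have hZt : Measurable (Z t) := by
          have : Measurable fun ω : Ω => Z (⟨t, ht1⟩ : Set.Ioc (0:ℝ) 1) ω :=
            hmeas.comp (measurable_prodMk_left)
          exact this
        have hZ1m : Measurable (Z 1) := by
          have : Measurable fun ω : Ω => Z (⟨1, by norm_num⟩ : Set.Ioc (0:ℝ) 1) ω :=
            hmeas.comp (measurable_prodMk_left)
          exact this
        have : P {ω | s ≤ Z t ω} = P {ω | s ≤ Z 1 ω} := by
          have e1 : {ω | s ≤ Z t ω} = Z t ⁻¹' Set.Ici s := rfl
          have e2 : {ω | s ≤ Z 1 ω} = Z 1 ⁻¹' Set.Ici s := rfl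
          rw [e1, e2, ← Measure.map_apply hZt measurableSet_Ici,
            ← Measure.map_apply hZ1m measurableSet_Ici, hident t ht1]
        rw [this]
        exact hZ1
      calc ENNReal.ofReal ((1 - ε^2)/(n:ℝ))
          = ENNReal.ofReal (1 - ε^2) * ENNReal.ofReal (1/(n:ℝ)) := by
            rw [← ENNReal.ofReal_mul (by nlinarith)]
            ring_nf
        _ = ∫⁻ _ in Set.Ioc (0:ℝ) (1/(n:ℝ)), ENNReal.ofReal (1 - ε^2) ∂volume := by
            rw [setLIntegral_const, Real.volume_Ioc, sub_zero]
        _ ≤ ∫⁻ t in Set.Ioc (0:ℝ) (1/(n:ℝ)), P (Prod.mk t ⁻¹' (S n)) ∂volume :=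
            setLIntegral_mono' measurableSet_Ioc h3
        _ ≤ ∫⁻ t, P (Prod.mk t ⁻¹' (S n)) ∂volume := setLIntegral_le_lintegral _ _
        _ = ∫⁻ ω, occ n ω ∂P := by rw [h1, h2]
    -- Markov
    set c : ENNReal := ENNReal.ofReal (1/(n:ℝ)) with hc
    set Y : Ω → ENNReal := fun ω => c - occ n ω with hY
    have hYmeas : Measurable Y := measurable_const.sub (hoccmeas n)
    have hocc_int : ∫⁻ ω, occ n ω ∂P ≠ ⊤ := by
      refine ne_top_of_le_ne_top ?_ (lintegral_mono (hocc_le n))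
      simp [lintegral_const]
    have hYint : ∫⁻ ω, Y ω ∂P ≤ ENNReal.ofReal (ε^2/(n:ℝ)) := by
      have := lintegral_sub (hoccmeas n) hocc_int (ae_of_all P (hocc_le n))
      rw [hY]
      simp only []
      rw [this, lintegral_const, measure_univ, mul_one]
      calc c - ∫⁻ ω, occ n ω ∂P ≤ c - ENNReal.ofReal ((1 - ε^2)/(n:ℝ)) :=
            tsub_le_tsub_left hmean c
        _ = ENNReal.ofReal (1/(n:ℝ) - (1 - ε^2)/(n:ℝ)) := by
            have h0 : (0:ℝ) ≤ (1 - ε^2)/(n:ℝ) := by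
              apply div_nonneg _ hn0.le
              nlinarith
            rw [hc, ← ENNReal.ofReal_sub _ h0]
        _ = ENNReal.ofReal (ε^2/(n:ℝ)) := by ring_nf
    set b : ENNReal := ENNReal.ofReal (ε/(n:ℝ)) with hb
    have hb0 : b ≠ 0 := by
      simp [hb, ENNReal.ofReal_eq_zero, not_le]
      positivity
    have hbtop : b ≠ ⊤ := ENNReal.ofReal_ne_top
    have hmarkov : P {ω | b ≤ Y ω} ≤ ENNReal.ofReal ε := by
      have h : b * P {ω | b ≤ Y ω} ≤ b * ENNReal.ofReal ε := by
        refine (mul_meas_ge_le_lintegral₀ (μ := P) hYmeas.aemeasurable b).trans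
          (hYint.trans ?_)
        rw [hb, ← ENNReal.ofReal_mul (by positivity)]
        apply ENNReal.ofReal_le_ofReal
        have : ε^2/(n:ℝ) = ε/(n:ℝ) * ε := by ring
        rw [this]
      exact (ENNReal.mul_le_mul_iff_right hb0 hbtop).mp h
    -- complement inclusion
    have hcompl : (A n)ᶜ ⊆ {ω | b ≤ Y ω} := by
      intro ω hω
      rw [hAeq n hn] at hω
      simp only [Set.mem_compl_iff, Set.mem_setOf_eq, not_le] at hω
      have h1 : occ n ω ≤ ENNReal.ofReal ((1 - ε)/(n:ℝ)) := hω.le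
      have h2 : c - ENNReal.ofReal ((1 - ε)/(n:ℝ)) ≤ Y ω := tsub_le_tsub_left h1 c
      have h3 : c - ENNReal.ofReal ((1 - ε)/(n:ℝ)) = b := by
        have h0 : (0:ℝ) ≤ (1 - ε)/(n:ℝ) := div_nonneg (by linarith) hn0.le
        rw [hc, hb, ← ENNReal.ofReal_sub _ h0]
        ring_nf
      rw [← h3]
      exact h2
    have : P ((A n)ᶜ) ≤ ENNReal.ofReal ε := (measure_mono hcompl).trans hmarkov
    have hPcompl : P (A n) = 1 - P ((A n)ᶜ) := by
      rw [measure_compl (hAmeas n) (measure_ne_top P _), measure_univ]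
      rw [ENNReal.sub_sub_cancel (by simp) (measure_mono (Set.subset_univ _) |>.trans
        (by simp [measure_univ]))]
    rw [hPcompl]
    calc ENNReal.ofReal (1 - ε) = 1 - ENNReal.ofReal ε := by
          rw [← ENNReal.ofReal_one, ← ENNReal.ofReal_sub _ hε0.le]
      _ ≤ 1 - P ((A n)ᶜ) := tsub_le_tsub_left this 1
  -- limsup step
  have hlim : (Filter.atTop.limsup A) = ⋂ m, ⋃ k, ⋃ (_ : m ≤ k), A k := by
    rw [Filter.limsup_eq_iInf_iSup_of_nat]
    simp only [Set.iInf_eq_iInter, Set.iSup_eq_iUnion]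
  have hBmeas : ∀ m, NullMeasurableSet (⋃ k, ⋃ (_ : m ≤ k), A k) P := fun m =>
    (MeasurableSet.iUnion fun k => MeasurableSet.iUnion fun _ => hAmeas k).nullMeasurableSet
  have hanti : Antitone fun m => ⋃ k, ⋃ (_ : m ≤ k), A k := by
    intro i j hij
    exact Set.biUnion_subset_biUnion_left fun k hk => le_trans hij hk
  have hdir : Directed (· ⊇ ·) fun m => ⋃ k, ⋃ (_ : m ≤ k), A k := hanti.directed_ge
  rw [show (Filter.atTop.limsup fun n : ℕ =>
      {ω | (1 - ε) / n ≤
        ∫ t in (0:ℝ)..(1 / (n:ℝ)), Set.indicator {u : ℝ | s ≤ Z u ω} (fun _ => (1:ℝ)) t})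
      = Filter.atTop.limsup A from rfl, hlim,
    Directed.measure_iInter hBmeas hdir ⟨0, measure_ne_top P _⟩]
  refine le_iInf fun m => ?_
  refine (hPA (m+1) (by omega)).trans (measure_mono ?_)
  exact Set.subset_biUnion_of_mem (show m ≤ m+1 by omega)
end

section
/- Let d ≥ 2 be an integer and let f, g : ℝ^d → ℝ be Schwartz functions. Suppose f is radially symmetric about the origin (i.e., f(x) depends only on ‖x‖: there is F : [0, ∞) → ℝ with f(x) = F(‖x‖) for all x), and suppose g has mean zero on every sphere centred at the origin (i.e., for every r > 0, ∫_{S^{d−1}} g(rθ) dσ(θ) = 0, where σ is the surface measure on the unit sphere S^{d−1}). Then ∫_{ℝ^d} ‖ξ‖^d · 𝓕f(ξ) · conj(𝓕g(ξ)) dξ = 0, where 𝓕 denotes the Fourier transform 𝓕h(ξ) = (2π)^{−d/2} ∫_{ℝ^d} h(x) e^{−i ξ·x} dx and conj denotes complex conjugation. -/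
open MeasureTheory

namespace RadialOrthoAux

open Metric Set Complex FourierTransform SchwartzMap
open scoped Pointwise Real

noncomputable section
variable {d : ℕ}

abbrev Ed (d : ℕ) := EuclideanSpace ℝ (Fin d)

/-- the sphere map induced by a linear isometry equiv -/
def sphMap (R : Ed d ≃ₗᵢ[ℝ] Ed d) (θ : sphere (0 : Ed d) 1) : sphere (0 : Ed d) 1 :=
  ⟨R θ.1, by
    have := θ.2
    simp only [mem_sphere_zero_iff_norm] at this ⊢
    simp [this]⟩

lemma continuous_sphMap (R : Ed d ≃ₗᵢ[ℝ] Ed d) : Continuous (sphMap R) :=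
  ((R.continuous.comp continuous_subtype_val).subtype_mk _)

lemma map_sphMap (R : Ed d ≃ₗᵢ[ℝ] Ed d) :
    Measure.map (sphMap R) (volume : Measure (Ed d)).toSphere
      = (volume : Measure (Ed d)).toSphere := by
  ext s hs
  rw [Measure.map_apply (continuous_sphMap R).measurable hs,
    Measure.toSphere_apply' _ (hs.preimage (continuous_sphMap R).measurable),
    Measure.toSphere_apply' _ hs]
  have h1 : (Subtype.val '' (sphMap R ⁻¹' s) : Set (Ed d)) = ⇑R ⁻¹' (Subtype.val '' s) := by
    ext x
    constructor
    · rintro ⟨θ, hθ, rfl⟩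
      exact ⟨sphMap R θ, hθ, rfl⟩
    · rintro ⟨θ, hθ, hx⟩
      have hxs : x ∈ sphere (0 : Ed d) 1 := by
        have := θ.2
        simp only [mem_sphere_zero_iff_norm] at this ⊢
        have h2 : ‖R x‖ = 1 := by rw [← hx]; exact this
        simpa using h2
      refine ⟨⟨x, hxs⟩, ?_, rfl⟩
      show sphMap R ⟨x, hxs⟩ ∈ s
      have : sphMap R ⟨x, hxs⟩ = θ := Subtype.ext hx.symm
      rw [this]; exact hθ
  rw [h1]
  have h2 : Ioo (0:ℝ) 1 • (⇑R ⁻¹' (Subtype.val '' s))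
      = ⇑R ⁻¹' (Ioo (0:ℝ) 1 • (Subtype.val '' s)) := by
    ext x
    simp only [Set.mem_smul, Set.mem_preimage]
    constructor
    · rintro ⟨r, hr, a, ha, rfl⟩
      exact ⟨r, hr, R a, ha, by simp⟩
    · rintro ⟨r, hr, a, ha, hx⟩
      exact ⟨r, hr, R.symm a, by simpa using ha, by
        apply R.injective
        rw [LinearIsometryEquiv.map_smul, LinearIsometryEquiv.apply_symm_apply, hx]⟩
  rw [h2]
  congr 1
  have hemb : MeasurableEmbedding (⇑R) := R.toHomeomorph.measurableEmbedding
  rw [← hemb.map_apply, R.measurePreserving.map_eq]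

lemma exists_isom (x y : Ed d) (h : ‖x‖ = ‖y‖) : ∃ R : Ed d ≃ₗᵢ[ℝ] Ed d, R x = y :=
  ⟨(ℝ ∙ (x - y))ᗮ.reflection, Submodule.reflection_sub h⟩

/-- integral invariance under sphere isometry -/
lemma integral_sphMap (R : Ed d ≃ₗᵢ[ℝ] Ed d) (F : sphere (0 : Ed d) 1 → ℂ)
    (hF : Continuous F) :
    ∫ θ, F (sphMap R θ) ∂(volume : Measure (Ed d)).toSphere
      = ∫ θ, F θ ∂(volume : Measure (Ed d)).toSphere := by
  conv_rhs => rw [← map_sphMap R]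
  rw [integral_map (continuous_sphMap R).measurable.aemeasurable
    (by rw [map_sphMap R]; exact hF.aestronglyMeasurable)]

/-- polar decomposition of the integral -/
lemma integral_polar (hd : 2 ≤ d) (φ : Ed d → ℂ) (hφ : Integrable φ) :
    ∫ x, φ x = ∫ r : Ioi (0:ℝ), ∫ θ : sphere (0 : Ed d) 1, φ (r.1 • θ.1)
      ∂(volume : Measure (Ed d)).toSphere ∂(Measure.volumeIoiPow (d - 1)) := by
  have hdim : Module.finrank ℝ (Ed d) = d := finrank_euclideanSpace_fin
  haveI : Nontrivial (Ed d) := Module.nontrivial_of_finrank_pos (R := ℝ)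
    (by rw [hdim]; omega : 0 < Module.finrank ℝ (Ed d))
  have mp := (volume : Measure (Ed d)).measurePreserving_homeomorphUnitSphereProd
  rw [hdim] at mp
  have h0 : ∫ x, φ x
      = ∫ x : ({0}ᶜ : Set (Ed d)), φ x.1 ∂((volume : Measure (Ed d)).comap Subtype.val) := by
    rw [integral_subtype_comap (measurableSet_singleton 0).compl, restrict_compl_singleton]
  have hemb := (Homeomorph.measurableEmbedding (homeomorphUnitSphereProd (Ed d)))
  have h1 := mp.integral_comp hemb (fun p : sphere (0 : Ed d) 1 × Ioi (0:ℝ) => φ (p.2.1 • p.1.1))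
  have h2 : ∀ x : ({0}ᶜ : Set (Ed d)),
      φ (((homeomorphUnitSphereProd (Ed d)) x).2.1 • ((homeomorphUnitSphereProd (Ed d)) x).1.1)
        = φ x.1 := by
    intro x
    have hx : (x : Ed d) ≠ 0 := x.2
    simp [homeomorphUnitSphereProd, smul_inv_smul₀ (norm_ne_zero_iff.2 hx)]
  have h3 : ∫ x : ({0}ᶜ : Set (Ed d)), φ x.1 ∂((volume : Measure (Ed d)).comap Subtype.val)
      = ∫ p : sphere (0 : Ed d) 1 × Ioi (0:ℝ), φ (p.2.1 • p.1.1)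
        ∂((volume : Measure (Ed d)).toSphere.prod (Measure.volumeIoiPow (d - 1))) := by
    rw [← h1]
    exact (integral_congr_ae (Filter.Eventually.of_forall h2)).symm
  have hint : Integrable (fun p : sphere (0 : Ed d) 1 × Ioi (0:ℝ) => φ (p.2.1 • p.1.1))
      ((volume : Measure (Ed d)).toSphere.prod (Measure.volumeIoiPow (d - 1))) := by
    rw [← mp.integrable_comp_emb hemb]
    have heq : ((fun p : sphere (0 : Ed d) 1 × Ioi (0:ℝ) => φ (p.2.1 • p.1.1))
        ∘ (homeomorphUnitSphereProd (Ed d))) = fun x : ({0}ᶜ : Set (Ed d)) => φ x.1 := by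
      funext x; exact h2 x
    rw [heq]
    have hsub := MeasurableEmbedding.subtype_coe (measurableSet_singleton (0:Ed d)).compl
    have : Integrable (fun x : ({0}ᶜ : Set (Ed d)) => φ x.1)
        ((volume : Measure (Ed d)).comap Subtype.val) := by
      rw [show (fun x : ({0}ᶜ : Set (Ed d)) => φ x.1)
        = φ ∘ (Subtype.val : ({0}ᶜ : Set (Ed d)) → Ed d) from rfl,
        ← hsub.integrable_map_iff, map_comap_subtype_coe
          (measurableSet_singleton (0:Ed d)).compl, restrict_compl_singleton]
      exact hφ
    exact this
  rw [h0, h3, integral_prod_symm _ hint]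

/-- complexification of a real Schwartz map -/
def toC (f : 𝓢(Ed d, ℝ)) : 𝓢(Ed d, ℂ) :=
  SchwartzMap.bilinLeftCLM (ContinuousLinearMap.lsmul ℝ ℝ : ℝ →L[ℝ] ℂ →L[ℝ] ℂ)
    (Function.HasTemperateGrowth.const (1 : ℂ)) f

@[simp] lemma toC_apply (f : 𝓢(Ed d, ℝ)) (x : Ed d) : toC f x = (f x : ℂ) := by
  show (f x) • (1:ℂ) = _
  simp [Complex.real_smul]

/-- the Fourier-type integral -/
def Φ (h : 𝓢(Ed d, ℝ)) (ξ : Ed d) : ℂ :=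
  ∫ x, (h x : ℂ) * Complex.exp (-Complex.I * ((inner ℝ ξ x : ℝ) : ℂ))

/-- our Fourier integral equals the Mathlib one at a rescaled point -/
lemma phi_eq (g : 𝓢(Ed d, ℝ)) (ξ : Ed d) :
    Φ g ξ = (fourierTransformCLM ℝ (toC g)) ((2 * π)⁻¹ • ξ) := by
  rw [Φ, fourierTransformCLM_apply, SchwartzMap.fourier_coe, Real.fourier_eq']
  congr 1
  funext x
  have h1 : (inner ℝ x ((2 * π)⁻¹ • ξ) : ℝ) = (2 * π)⁻¹ * (inner ℝ x ξ : ℝ) :=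
    real_inner_smul_right _ _ _
  have hπ : (2 * π) ≠ 0 := by positivity
  rw [toC_apply, h1]
  have h2 : -2 * π * ((2 * π)⁻¹ * (inner ℝ x ξ : ℝ)) = -(inner ℝ x ξ : ℝ) := by
    field_simp
  rw [h2]
  rw [smul_eq_mul, mul_comm]
  congr 1
  push_cast
  rw [real_inner_comm x ξ]
  ring

lemma phi_continuous (g : 𝓢(Ed d, ℝ)) : Continuous (Φ g) := by
  have : Φ g = fun ξ => (fourierTransformCLM ℝ (toC g)) ((2 * π)⁻¹ • ξ) := by
    funext ξ; exact phi_eq g ξ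
  rw [this]
  exact (fourierTransformCLM ℝ (toC g)).continuous.comp (continuous_const_smul _)

lemma norm_exp_aux (r : ℝ) : ‖Complex.exp (-Complex.I * (r : ℂ))‖ = 1 := by
  rw [Complex.norm_exp]
  simp [Complex.mul_re]

lemma norm_integrand_aux (c : ℝ) (r : ℝ) :
    ‖(c : ℂ) * Complex.exp (-Complex.I * (r : ℂ))‖ = |c| := by
  rw [norm_mul, norm_exp_aux, mul_one, Complex.norm_real, Real.norm_eq_abs]

lemma phi_norm_le (g : 𝓢(Ed d, ℝ)) (ξ : Ed d) : ‖Φ g ξ‖ ≤ ∫ x, ‖g x‖ := by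
  refine (norm_integral_le_integral_norm _).trans (le_of_eq ?_)
  congr 1
  funext x
  rw [norm_integrand_aux, Real.norm_eq_abs]

lemma decay_int (g : 𝓢(Ed d, ℝ)) :
    Integrable (fun ξ : Ed d => ‖ξ‖ ^ d * ‖Φ g ξ‖) := by
  have hphi : (fun ξ : Ed d => ‖ξ‖ ^ d * ‖Φ g ξ‖)
      = fun ξ : Ed d => ‖ξ‖ ^ d * ‖(fourierTransformCLM ℝ (toC g)) ((2 * π)⁻¹ • ξ)‖ := by
    funext ξ; rw [phi_eq]
  rw [hphi]
  set G := fourierTransformCLM ℝ (toC g) with hG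
  have h1 : Integrable (fun w : Ed d => (2 * π) ^ d * (‖w‖ ^ d * ‖G w‖)) :=
    (G.integrable_pow_mul volume d).const_mul _
  have h2 := h1.comp_smul (R := (2 * π)⁻¹) (by positivity)
  apply h2.mono' ?_ ?_
  · apply Continuous.aestronglyMeasurable
    exact ((continuous_norm.pow d).mul ((G.continuous.comp (continuous_const_smul _)).norm))
  · filter_upwards with ξ
    have hπ : (0:ℝ) < 2 * π := by positivity
    have hnorm : ‖(2*π)⁻¹ • ξ‖ = (2*π)⁻¹ * ‖ξ‖ := by
      rw [norm_smul, Real.norm_eq_abs, _root_.abs_of_pos (inv_pos.2 hπ)]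
    have key : (2 * π) ^ d * (‖(2*π)⁻¹ • ξ‖ ^ d * ‖G ((2*π)⁻¹ • ξ)‖)
        = ‖ξ‖ ^ d * ‖G ((2*π)⁻¹ • ξ)‖ := by
      rw [hnorm]
      rw [mul_pow (2 * π)⁻¹ ‖ξ‖ d, ← mul_assoc, ← mul_assoc, ← mul_pow (2 * π),
        mul_inv_cancel₀ hπ.ne', one_pow, one_mul]
    rw [Real.norm_eq_abs, _root_.abs_of_nonneg (by positivity), key]

/-- radiality of the Fourier-type integral of a radial function -/
lemma phi_radial (f : 𝓢(Ed d, ℝ)) (hf : ∃ F : ℝ → ℝ, ∀ x, f x = F ‖x‖)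
    {ξ η : Ed d} (h : ‖ξ‖ = ‖η‖) : Φ f ξ = Φ f η := by
  obtain ⟨F, hF⟩ := hf
  obtain ⟨R, hR⟩ := exists_isom ξ η h
  have hcomp := R.measurePreserving.integral_comp R.toHomeomorph.measurableEmbedding
    (fun x => (f x : ℂ) * Complex.exp (-Complex.I * ((inner ℝ η x : ℝ) : ℂ)))
  rw [Φ, Φ, ← hcomp]
  congr 1
  funext x
  have h1 : f (R x) = f x := by rw [hF, hF]; simp
  have h2 : (inner ℝ η (R x) : ℝ) = (inner ℝ ξ x : ℝ) := by
    rw [← hR]; exact R.inner_map_map ξ x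
  rw [h1, h2]

/-- the spherical kernel -/
def K (r : ℝ) (x : Ed d) : ℂ :=
  ∫ θ : sphere (0 : Ed d) 1, Complex.exp (-Complex.I * ((r * inner ℝ θ.1 x : ℝ) : ℂ))
    ∂(volume : Measure (Ed d)).toSphere

lemma K_continuous (r : ℝ) : Continuous (K (d := d) r) := by
  apply continuous_of_dominated (bound := fun _ => (1:ℝ))
  · intro x
    apply Continuous.aestronglyMeasurable
    apply Continuous.cexp
    apply Continuous.mul continuous_const
    apply Complex.continuous_ofReal.comp
    exact continuous_const.mul ((Continuous.inner continuous_subtype_val continuous_const))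
  · intro x
    filter_upwards with θ
    rw [norm_exp_aux]
  · exact integrable_const _
  · filter_upwards with θ
    apply Continuous.cexp
    apply Continuous.mul continuous_const
    apply Complex.continuous_ofReal.comp
    exact continuous_const.mul (Continuous.inner continuous_const continuous_id)

lemma K_radial (r : ℝ) {x y : Ed d} (h : ‖x‖ = ‖y‖) : K r y = K r x := by
  obtain ⟨R, hR⟩ := exists_isom x y h
  have key : ∀ θ : sphere (0 : Ed d) 1, (inner ℝ θ.1 y : ℝ) = (inner ℝ (R.symm θ.1) x : ℝ) := by
    intro θ
    rw [← hR, ← R.inner_map_map (R.symm θ.1) x, R.apply_symm_apply]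
  have hFc : Continuous (fun θ : sphere (0 : Ed d) 1 =>
      Complex.exp (-Complex.I * ((r * inner ℝ θ.1 x : ℝ) : ℂ))) := by
    apply Continuous.cexp
    apply Continuous.mul continuous_const
    apply Complex.continuous_ofReal.comp
    exact continuous_const.mul (Continuous.inner continuous_subtype_val continuous_const)
  calc K r y
      = ∫ θ : sphere (0 : Ed d) 1,
          Complex.exp (-Complex.I * ((r * inner ℝ (R.symm θ.1) x : ℝ) : ℂ))
          ∂(volume : Measure (Ed d)).toSphere := by
        rw [K]
        congr 1
        funext θ
        rw [key θ]
    _ = ∫ θ : sphere (0 : Ed d) 1,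
          Complex.exp (-Complex.I * ((r * inner ℝ θ.1 x : ℝ) : ℂ))
          ∂(volume : Measure (Ed d)).toSphere := by
        have := integral_sphMap (R := R.symm)
          (F := fun θ : sphere (0 : Ed d) 1 =>
            Complex.exp (-Complex.I * ((r * inner ℝ θ.1 x : ℝ) : ℂ))) hFc
        rw [← this]
        rfl
    _ = K r x := rfl

lemma K_norm_le (r : ℝ) (x : Ed d) :
    ‖K r x‖ ≤ (((volume : Measure (Ed d)).toSphere) Set.univ).toReal := by
  refine (norm_integral_le_integral_norm _).trans (le_of_eq ?_)
  have : ∀ θ : sphere (0 : Ed d) 1,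
      ‖Complex.exp (-Complex.I * ((r * inner ℝ θ.1 x : ℝ) : ℂ))‖ = 1 := fun θ => norm_exp_aux _
  rw [integral_congr_ae (Filter.Eventually.of_forall this)]
  simp
  exact Or.inl rfl

lemma integrand_continuous (g : 𝓢(Ed d, ℝ)) {X : Type*} [TopologicalSpace X]
    (u : X → Ed d) (w : X → ℝ) (hu : Continuous u) (hw : Continuous w) :
    Continuous (fun p : X => (g (u p) : ℂ) * Complex.exp (-Complex.I * ((w p : ℝ) : ℂ))) := by
  apply Continuous.mul
  · exact Complex.continuous_ofReal.comp (g.continuous.comp hu)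
  · exact Continuous.cexp (continuous_const.mul (Complex.continuous_ofReal.comp hw))

lemma integrable_mul_exp (g : 𝓢(Ed d, ℝ)) (w : Ed d → ℝ) (hw : Continuous w) :
    Integrable (fun x => (g x : ℂ) * Complex.exp (-Complex.I * ((w x : ℝ) : ℂ))) := by
  apply ((toC g).integrable (μ := volume)).norm.mono'
  · exact (integrand_continuous g id w continuous_id hw).aestronglyMeasurable
  · filter_upwards with x
    rw [norm_mul, norm_exp_aux, mul_one]
    rw [toC_apply]

/-- spherical means of Φ g vanish -/
lemma phi_mean_zero (hd : 2 ≤ d) (g : 𝓢(Ed d, ℝ))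
    (hg : ∀ r > (0:ℝ),
      (∫ θ : Metric.sphere (0 : Ed d) 1, g (r • (θ : Ed d))
        ∂((volume : Measure (Ed d)).toSphere)) = 0)
    {r : ℝ} (hr : 0 < r) :
    ∫ θ : sphere (0 : Ed d) 1, Φ g (r • θ.1) ∂(volume : Measure (Ed d)).toSphere = 0 := by
  -- a fixed unit vector
  have hd0 : 0 < d := by omega
  set e : Ed d := EuclideanSpace.single (⟨0, hd0⟩ : Fin d) (1:ℝ) with he
  have hnorme : ‖e‖ = 1 := by rw [he, EuclideanSpace.norm_single]; simp
  set σ := (volume : Measure (Ed d)).toSphere with hσ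
  -- step 1: rewrite the integrand
  have step1 : ∀ θ : sphere (0 : Ed d) 1, Φ g (r • θ.1)
      = ∫ x, (g x : ℂ) * Complex.exp (-Complex.I * ((r * inner ℝ θ.1 x : ℝ) : ℂ)) := by
    intro θ
    rw [Φ]
    congr 1
    funext x
    rw [real_inner_smul_left]
  simp only [step1]
  -- step 2: swap the integrals
  have hswap : ∫ θ : sphere (0 : Ed d) 1,
        (∫ x, (g x : ℂ) * Complex.exp (-Complex.I * ((r * inner ℝ θ.1 x : ℝ) : ℂ))) ∂σ
      = ∫ x, (∫ θ : sphere (0 : Ed d) 1,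
          (g x : ℂ) * Complex.exp (-Complex.I * ((r * inner ℝ θ.1 x : ℝ) : ℂ)) ∂σ) := by
    apply integral_integral_swap
    have haesm : AEStronglyMeasurable
        (Function.uncurry fun (θ : sphere (0 : Ed d) 1) (x : Ed d) =>
          (g x : ℂ) * Complex.exp (-Complex.I * ((r * inner ℝ θ.1 x : ℝ) : ℂ)))
        (σ.prod volume) := by
      apply Continuous.aestronglyMeasurable
      exact integrand_continuous g (fun p : sphere (0 : Ed d) 1 × Ed d => p.2)
        (fun p : sphere (0 : Ed d) 1 × Ed d => r * inner ℝ p.1.1 p.2)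
        continuous_snd (continuous_const.mul
          (Continuous.inner (𝕜 := ℝ)
            (f := fun p : sphere (0 : Ed d) 1 × Ed d => (p.1.1 : Ed d))
            (g := fun p : sphere (0 : Ed d) 1 × Ed d => p.2)
            (by fun_prop) (by fun_prop)))
    rw [integrable_prod_iff haesm]
    constructor
    · filter_upwards with θ
      exact integrable_mul_exp g (fun x => r * inner ℝ θ.1 x)
        (continuous_const.mul (Continuous.inner continuous_const continuous_id))
    · have hnorm : ∀ θ : sphere (0 : Ed d) 1,
          (∫ x, ‖(g x : ℂ) * Complex.exp (-Complex.I * ((r * inner ℝ θ.1 x : ℝ) : ℂ))‖)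
            = ∫ x, ‖g x‖ := by
        intro θ
        congr 1
        funext x
        rw [norm_mul, norm_exp_aux, mul_one, Complex.norm_real]
      refine (integrable_const (∫ x, ‖g x‖ : ℝ)).congr
        (Filter.Eventually.of_forall fun θ => ?_)
      simp only [Function.uncurry]
      exact (hnorm θ).symm
  rw [hswap]
  -- step 3: pull out g x
  have step3 : ∀ x : Ed d,
      (∫ θ : sphere (0 : Ed d) 1,
        (g x : ℂ) * Complex.exp (-Complex.I * ((r * inner ℝ θ.1 x : ℝ) : ℂ)) ∂σ)
      = (g x : ℂ) * K r x := by
    intro x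
    rw [K, ← integral_const_mul]
  simp only [step3]
  -- step 4: polar coordinates
  have hKint : Integrable (fun x => (g x : ℂ) * K r x) := by
    apply (((toC g).integrable (μ := volume)).norm.const_mul ((σ Set.univ).toReal)).mono'
    · exact ((Complex.continuous_ofReal.comp g.continuous).mul (K_continuous r)).aestronglyMeasurable
    · filter_upwards with x
      rw [norm_mul, mul_comm ((σ Set.univ).toReal), toC_apply]
      exact mul_le_mul_of_nonneg_left (K_norm_le r x) (norm_nonneg _)
  rw [integral_polar hd _ hKint]
  have inner_zero : ∀ s : Ioi (0:ℝ),
      (∫ θ : sphere (0 : Ed d) 1, (g (s.1 • θ.1) : ℂ) * K r (s.1 • θ.1) ∂σ) = 0 := by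
    rintro ⟨s, hs⟩
    have hKconst : ∀ θ : sphere (0 : Ed d) 1, K r (s • θ.1) = K r (s • e) := by
      intro θ
      apply K_radial
      have hθ : ‖θ.1‖ = 1 := mem_sphere_zero_iff_norm.mp θ.2
      rw [norm_smul, norm_smul, hθ, hnorme]
    simp only [hKconst]
    rw [integral_mul_const]
    have : (∫ θ : sphere (0 : Ed d) 1, ((g (s • θ.1) : ℝ) : ℂ) ∂σ)
        = ((∫ θ : sphere (0 : Ed d) 1, g (s • θ.1) ∂σ : ℝ) : ℂ) := integral_ofReal
    rw [this, hg s hs]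
    simp
  calc ∫ s : Ioi (0:ℝ), (∫ θ : sphere (0 : Ed d) 1, (g (s.1 • θ.1) : ℂ) * K r (s.1 • θ.1) ∂σ)
        ∂(Measure.volumeIoiPow (d-1))
      = ∫ _s : Ioi (0:ℝ), (0:ℂ) ∂(Measure.volumeIoiPow (d-1)) :=
        integral_congr_ae (Filter.Eventually.of_forall inner_zero)
    _ = 0 := integral_zero _ _

end
end RadialOrthoAux

/-- Orthogonality in the homogeneous Sobolev space of order `d/2`. -/
theorem radial_sphericalMeanZero_orthogonal (d : ℕ) (hd : 2 ≤ d)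
    (f g : SchwartzMap (EuclideanSpace ℝ (Fin d)) ℝ)
    (hf : ∃ F : ℝ → ℝ, ∀ x, f x = F ‖x‖)
    (hg : ∀ r > (0:ℝ),
      (∫ θ : Metric.sphere (0 : EuclideanSpace ℝ (Fin d)) 1,
          g (r • (θ : EuclideanSpace ℝ (Fin d)))
        ∂((volume : Measure (EuclideanSpace ℝ (Fin d))).toSphere)) = 0) :
    (∫ ξ : EuclideanSpace ℝ (Fin d),
        ((‖ξ‖ ^ d : ℝ) : ℂ) *
          ((((2 * Real.pi) ^ (-(d : ℝ) / 2) : ℝ) : ℂ) *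
            ∫ x : EuclideanSpace ℝ (Fin d),
              (f x : ℂ) * Complex.exp (-Complex.I * ((inner ℝ ξ x : ℝ) : ℂ))) *
          (starRingEnd ℂ)
            ((((2 * Real.pi) ^ (-(d : ℝ) / 2) : ℝ) : ℂ) *
              ∫ x : EuclideanSpace ℝ (Fin d),
                (g x : ℂ) * Complex.exp (-Complex.I * ((inner ℝ ξ x : ℝ) : ℂ))))
      = 0 := by
  classical
  open RadialOrthoAux Set Metric in
  set C : ℂ := (((2 * Real.pi) ^ (-(d : ℝ) / 2) : ℝ) : ℂ) with hC
  set H : EuclideanSpace ℝ (Fin d) → ℂ := fun ξ =>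
    ((‖ξ‖ ^ d : ℝ) : ℂ) * (C * Φ f ξ) * (starRingEnd ℂ) (C * Φ g ξ) with hH
  have hHint : Integrable H := by
    have hMf : (0:ℝ) ≤ ∫ x : EuclideanSpace ℝ (Fin d), ‖f x‖ :=
      integral_nonneg (fun x => norm_nonneg _)
    set Mf : ℝ := ∫ x : EuclideanSpace ℝ (Fin d), ‖f x‖ with hMf'
    apply ((decay_int g).const_mul (‖C‖^2 * Mf)).mono'
    · apply Continuous.aestronglyMeasurable
      apply Continuous.mul
      · apply Continuous.mul
        · exact Complex.continuous_ofReal.comp (continuous_norm.pow d)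
        · exact continuous_const.mul (phi_continuous f)
      · exact continuous_star.comp (continuous_const.mul (phi_continuous g))
    · filter_upwards with ξ
      have h1 : ‖H ξ‖ = ‖ξ‖^d * (‖C‖ * ‖Φ f ξ‖) * (‖C‖ * ‖Φ g ξ‖) := by
        rw [hH]
        simp only [norm_mul, RCLike.norm_conj]
        rw [Complex.norm_real, Real.norm_eq_abs, _root_.abs_of_nonneg (by positivity)]
      rw [h1]
      have h2 : ‖Φ f ξ‖ ≤ Mf := phi_norm_le f ξ
      have h3 : (0:ℝ) ≤ ‖ξ‖^d := by positivity
      have h4 : (0:ℝ) ≤ ‖Φ g ξ‖ := norm_nonneg _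
      have h5 : (0:ℝ) ≤ ‖C‖ := norm_nonneg _
      have key := mul_nonneg (sub_nonneg.2 h2)
        (mul_nonneg (mul_nonneg (mul_nonneg h5 h5) h3) h4)
      nlinarith [key]
  show ∫ ξ, H ξ = 0
  rw [integral_polar hd H hHint]
  have hzero : ∀ r : Ioi (0:ℝ),
      (∫ θ : sphere (0 : EuclideanSpace ℝ (Fin d)) 1, H (r.1 • θ.1)
        ∂(volume : Measure (EuclideanSpace ℝ (Fin d))).toSphere) = 0 := by
    rintro ⟨r, hr⟩
    have hr' : (0:ℝ) < r := hr
    have hd0 : 0 < d := by omega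
    set e : EuclideanSpace ℝ (Fin d) := EuclideanSpace.single (⟨0, hd0⟩ : Fin d) (1:ℝ) with he
    have hnorme : ‖e‖ = 1 := by rw [he, EuclideanSpace.norm_single]; simp
    have hnormrθ : ∀ θ : sphere (0 : EuclideanSpace ℝ (Fin d)) 1, ‖r • θ.1‖ = r := by
      intro θ
      rw [norm_smul, mem_sphere_zero_iff_norm.mp θ.2, mul_one, Real.norm_eq_abs,
        _root_.abs_of_pos hr']
    have hA : ∀ θ : sphere (0 : EuclideanSpace ℝ (Fin d)) 1,
        H (r • θ.1) = (((r^d : ℝ)) : ℂ) * (C * Φ f (r • e)) * (starRingEnd ℂ) C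
          * (starRingEnd ℂ) (Φ g (r • θ.1)) := by
      intro θ
      simp only [hH]
      have hrad : Φ f (r • θ.1) = Φ f (r • e) := by
        apply phi_radial f hf
        rw [hnormrθ θ, norm_smul, hnorme, mul_one, Real.norm_eq_abs, _root_.abs_of_pos hr']
      rw [hnormrθ θ, hrad, map_mul]
      ring
    simp only [hA]
    rw [integral_const_mul]
    have : (∫ θ : sphere (0 : EuclideanSpace ℝ (Fin d)) 1,
        (starRingEnd ℂ) (Φ g (r • θ.1)) ∂(volume : Measure (EuclideanSpace ℝ (Fin d))).toSphere)
        = (starRingEnd ℂ) (∫ θ : sphere (0 : EuclideanSpace ℝ (Fin d)) 1,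
          Φ g (r • θ.1) ∂(volume : Measure (EuclideanSpace ℝ (Fin d))).toSphere) := integral_conj
    rw [this, phi_mean_zero hd g hg hr']
    simp
  calc ∫ r : Ioi (0:ℝ), (∫ θ : sphere (0 : EuclideanSpace ℝ (Fin d)) 1, H (r.1 • θ.1)
        ∂(volume : Measure (EuclideanSpace ℝ (Fin d))).toSphere) ∂(Measure.volumeIoiPow (d-1))
      = ∫ _r : Ioi (0:ℝ), (0:ℂ) ∂(Measure.volumeIoiPow (d-1)) :=
        integral_congr_ae (Filter.Eventually.of_forall hzero)
    _ = 0 := integral_zero _ _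
end
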